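/- arXiv:1603.03813 — 6 statements merged into one kernel-verified Lean document; each statement's English description precedes it below -/
import Mathlib

section
/- For any non-negative multiplicative function g and x ≥ 1, the sum of g(n)/n over n ≤ x is at most exp(Σ_{q ≤ x} g(q)/q), where q runs over prime powers at most x. -/
open Finset

open Classical in
private lemma aux_main (f : ℕ → ℝ) (h0 : ∀ n, 0 ≤ f n) (h1 : f 1 = 1)
    (hm : ∀ m n : ℕ, Nat.Coprime m n → f (m * n) = f m * f n)
    (N : ℕ) (hN : 1 ≤ N) (P : Finset ℕ) (hP : ∀ p ∈ P, p.Prime) :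
    ∑ n ∈ (Finset.Icc 1 N).filter (fun n => n.primeFactors ⊆ P), f n
      ≤ ∏ p ∈ P, ∑ q ∈ (Finset.Icc 1 N).filter (fun q => ∃ k, q = p ^ k), f q := by
  induction P using Finset.induction_on with
  | empty =>
      have : (Finset.Icc 1 N).filter (fun n => n.primeFactors ⊆ (∅ : Finset ℕ)) = {1} := by
        ext n
        simp only [mem_filter, mem_Icc, Finset.subset_empty, Nat.primeFactors_eq_empty,
          mem_singleton]
        constructor
        · rintro ⟨⟨h1n, _⟩, h2 | h2⟩ <;> omega
        · rintro rfl; exact ⟨⟨le_refl _, hN⟩, Or.inr rfl⟩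
      rw [this]
      simp [h1]
  | @insert p P' hpP' ih =>
      have hp : p.Prime := hP p (mem_insert_self _ _)
      have hP' : ∀ q ∈ P', q.Prime := fun q hq => hP q (mem_insert_of_mem hq)
      set A := (Finset.Icc 1 N).filter (fun n => n.primeFactors ⊆ insert p P') with hA
      set M := (Finset.Icc 1 N).filter (fun n => n.primeFactors ⊆ P') with hM
      set Q := (Finset.Icc 1 N).filter (fun q => ∃ k, q = p ^ k) with hQ
      set e : ℕ → ℕ × ℕ := fun n => (ordProj[p] n, ordCompl[p] n) with he
      have hAmem : ∀ n ∈ A, 1 ≤ n ∧ n ≤ N ∧ n.primeFactors ⊆ insert p P' := by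
        intro n hn
        simp only [hA, mem_filter, mem_Icc] at hn
        exact ⟨hn.1.1, hn.1.2, hn.2⟩
      have hmul : ∀ n ∈ A, (e n).1 * (e n).2 = n := by
        intro n _; exact Nat.ordProj_mul_ordCompl_eq_self n p
      have hEQ : ∀ n ∈ A, (e n).1 ∈ Q := by
        intro n hn
        obtain ⟨h1n, h2n, _⟩ := hAmem n hn
        have hn0 : n ≠ 0 := by omega
        simp only [hQ, mem_filter, mem_Icc]
        exact ⟨⟨Nat.one_le_iff_ne_zero.mpr (pow_ne_zero _ hp.pos.ne'),
          (Nat.ordProj_le p hn0).trans h2n⟩, _, rfl⟩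
      have hEM : ∀ n ∈ A, (e n).2 ∈ M := by
        intro n hn
        obtain ⟨h1n, h2n, h3n⟩ := hAmem n hn
        have hn0 : n ≠ 0 := by omega
        simp only [hM, mem_filter, mem_Icc]
        refine ⟨⟨Nat.ordCompl_pos p hn0, (Nat.ordCompl_le n p).trans h2n⟩, ?_⟩
        intro q hq
        have hq' : q.Prime ∧ q ∣ ordCompl[p] n :=
          ⟨Nat.prime_of_mem_primeFactors hq, Nat.dvd_of_mem_primeFactors hq⟩
        have hqn : q ∈ n.primeFactors := by
          rw [Nat.mem_primeFactors]
          exact ⟨hq'.1, hq'.2.trans (Nat.ordCompl_dvd n p), hn0⟩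
        have := h3n hqn
        rcases mem_insert.mp this with rfl | h
        · exact absurd hq'.2 (Nat.not_dvd_ordCompl hp hn0)
        · exact h
      have hfe : ∀ n ∈ A, f n = f (e n).1 * f (e n).2 := by
        intro n hn
        obtain ⟨h1n, _, _⟩ := hAmem n hn
        have hn0 : n ≠ 0 := by omega
        have hcop : Nat.Coprime (e n).1 (e n).2 :=
          Nat.Coprime.pow_left _ ((Nat.Prime.coprime_iff_not_dvd hp).mpr
            (Nat.not_dvd_ordCompl hp hn0))
        rw [← hm _ _ hcop, hmul n hn]
      have hinj : ∀ n ∈ A, ∀ m ∈ A, e n = e m → n = m := by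
        intro n hn m hm' hnm
        rw [← hmul n hn, ← hmul m hm', hnm]
      calc ∑ n ∈ A, f n = ∑ n ∈ A, f (e n).1 * f (e n).2 := Finset.sum_congr rfl hfe
        _ = ∑ y ∈ A.image e, f y.1 * f y.2 := by rw [Finset.sum_image hinj]
        _ ≤ ∑ y ∈ Q ×ˢ M, f y.1 * f y.2 := by
            refine Finset.sum_le_sum_of_subset_of_nonneg ?_ ?_
            · intro y hy
              obtain ⟨n, hn, rfl⟩ := Finset.mem_image.mp hy
              exact Finset.mem_product.mpr ⟨hEQ n hn, hEM n hn⟩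
            · intro y _ _; exact mul_nonneg (h0 _) (h0 _)
        _ = (∑ q ∈ Q, f q) * (∑ m ∈ M, f m) := by
            rw [Finset.sum_product, ← Finset.sum_mul_sum]
        _ ≤ (∑ q ∈ Q, f q) *
              ∏ p' ∈ P', ∑ q ∈ (Finset.Icc 1 N).filter (fun q => ∃ k, q = p' ^ k), f q := by
            refine mul_le_mul_of_nonneg_left (ih hP') ?_
            exact Finset.sum_nonneg fun q _ => h0 q
        _ = _ := by rw [Finset.prod_insert hpP', ← hQ]

open Classical in
private lemma aux_stepB (f : ℕ → ℝ) (h1 : f 1 = 1) (N : ℕ) (hN : 1 ≤ N)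
    (p : ℕ) (hp : p.Prime) :
    ∑ q ∈ (Finset.Icc 1 N).filter (fun q => ∃ k, q = p ^ k), f q
      = 1 + ∑ q ∈ ((Finset.range (N + 1)).filter IsPrimePow).filter
          (fun q => q.minFac = p), f q := by
  have hset : (Finset.Icc 1 N).filter (fun q => ∃ k, q = p ^ k)
      = insert 1 (((Finset.range (N + 1)).filter IsPrimePow).filter (fun q => q.minFac = p)) := by
    ext q
    simp only [mem_filter, mem_Icc, mem_insert, mem_range]
    constructor
    · rintro ⟨⟨h1q, h2q⟩, k, rfl⟩
      rcases Nat.eq_zero_or_pos k with rfl | hk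
      · exact Or.inl (pow_zero p)
      · refine Or.inr ⟨⟨by omega, ⟨p, k, hp.prime, hk, rfl⟩⟩, hp.pow_minFac hk.ne'⟩
    · rintro (rfl | ⟨⟨hq1, hq2⟩, hq3⟩)
      · exact ⟨⟨le_refl _, hN⟩, 0, (pow_zero p).symm⟩
      · obtain ⟨r, k, hr, hk, rfl⟩ := hq2
        have hrn : Nat.Prime r := Nat.prime_iff.mpr hr
        have : (r ^ k).minFac = r := hrn.pow_minFac hk.ne'
        rw [this] at hq3
        subst hq3
        exact ⟨⟨Nat.one_le_iff_ne_zero.mpr (pow_ne_zero _ hrn.pos.ne'), by omega⟩, k, rfl⟩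
  rw [hset, Finset.sum_insert, h1]
  simp only [mem_filter, mem_range]
  rintro ⟨⟨_, h⟩, _⟩
  exact not_isPrimePow_one h

theorem sum_div_le_exp_primePowers
    (g : ℕ → ℝ) (hg0 : ∀ n, 0 ≤ g n) (hg1 : g 1 = 1)
    (hmult : ∀ m n : ℕ, Nat.Coprime m n → g (m * n) = g m * g n)
    (x : ℝ) (hx : 1 ≤ x) :
    ∑ n ∈ Finset.Icc 1 ⌊x⌋₊, g n / n ≤
      Real.exp (∑ q ∈ (Finset.range (⌊x⌋₊ + 1)).filter IsPrimePow, g q / q) := by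
  classical
  set N := ⌊x⌋₊ with hNdef
  have hN : 1 ≤ N := Nat.le_floor (by exact_mod_cast hx)
  set f : ℕ → ℝ := fun n => g n / n with hf
  have h0 : ∀ n, 0 ≤ f n := fun n => div_nonneg (hg0 n) (Nat.cast_nonneg n)
  have h1 : f 1 = 1 := by simp [hf, hg1]
  have hm : ∀ m n : ℕ, Nat.Coprime m n → f (m * n) = f m * f n := by
    intro m n h
    simp only [hf]
    rw [hmult m n h, Nat.cast_mul, div_mul_div_comm]
  set P := (Finset.range (N + 1)).filter Nat.Prime with hP
  have hPp : ∀ p ∈ P, p.Prime := fun p hp => (mem_filter.mp hp).2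
  set S := (Finset.range (N + 1)).filter IsPrimePow with hS
  have hmaps : ∀ q ∈ S, q.minFac ∈ P := by
    intro q hq
    simp only [hS, mem_filter, mem_range] at hq
    obtain ⟨hq1, hq2⟩ := hq
    have hql : q ≠ 1 := hq2.ne_one
    have hprime := Nat.minFac_prime hql
    simp only [hP, mem_filter, mem_range]
    exact ⟨lt_of_le_of_lt (Nat.minFac_le hq2.pos) hq1, hprime⟩
  have hfull : (Finset.Icc 1 N).filter (fun n => n.primeFactors ⊆ P) = Finset.Icc 1 N := by
    refine Finset.filter_true_of_mem ?_
    intro n hn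
    rw [mem_Icc] at hn
    intro q hq
    simp only [hP, mem_filter, mem_range]
    refine ⟨?_, Nat.prime_of_mem_primeFactors hq⟩
    have : q ≤ n := Nat.le_of_dvd (by omega) (Nat.dvd_of_mem_primeFactors hq)
    omega
  calc ∑ n ∈ Finset.Icc 1 N, f n
      = ∑ n ∈ (Finset.Icc 1 N).filter (fun n => n.primeFactors ⊆ P), f n := by rw [hfull]
    _ ≤ ∏ p ∈ P, ∑ q ∈ (Finset.Icc 1 N).filter (fun q => ∃ k, q = p ^ k), f q :=
        aux_main f h0 h1 hm N hN P hPp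
    _ = ∏ p ∈ P, (1 + ∑ q ∈ S.filter (fun q => q.minFac = p), f q) := by
        refine Finset.prod_congr rfl fun p hp => ?_
        exact aux_stepB f h1 N hN p (hPp p hp)
    _ ≤ ∏ p ∈ P, Real.exp (∑ q ∈ S.filter (fun q => q.minFac = p), f q) := by
        refine Finset.prod_le_prod ?_ ?_
        · intro p _
          have : (0:ℝ) ≤ ∑ q ∈ S.filter (fun q => q.minFac = p), f q :=
            Finset.sum_nonneg fun q _ => h0 q
          linarith
        · intro p _
          rw [add_comm]
          exact Real.add_one_le_exp _
    _ = Real.exp (∑ p ∈ P, ∑ q ∈ S.filter (fun q => q.minFac = p), f q) :=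
        (Real.exp_sum _ _).symm
    _ = Real.exp (∑ q ∈ S, f q) := by
        rw [Finset.sum_fiberwise_of_maps_to hmaps]
end

section
/- For every non-negative multiplicative function g and every real x ≥ 2, Σ_{2 ≤ n ≤ x} g(n) ≤ (x/log x + 10x/(log x)^2) · Δ̃ · Σ_{n ≤ x} g(n)/n, where Δ̃ = sup_{1 ≤ y ≤ x} y^{-1} Σ_{q ≤ y} g(q) log q, with q running over prime powers. -/
open Finset Real


lemma log_decomp (n : ℕ) (hn : n ≠ 0) :
    Real.log n = ∑ p ∈ n.primeFactors, Real.log ((p ^ n.factorization p : ℕ) : ℝ) := by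
  conv_lhs => rw [← Nat.factorization_prod_pow_eq_self hn]
  rw [Finsupp.prod, Nat.support_factorization, Nat.cast_prod, Real.log_prod]
  intro p hp
  have := Nat.pos_of_mem_primeFactors hp
  positivity

lemma term_decomp (g : ℕ → ℝ)
    (hmult : ∀ m n : ℕ, Nat.Coprime m n → g (m * n) = g m * g n)
    (n : ℕ) (hn : n ≠ 0) :
    g n * Real.log n = ∑ p ∈ n.primeFactors,
      g (n / p ^ n.factorization p) *
        (g (p ^ n.factorization p) * Real.log ((p ^ n.factorization p : ℕ) : ℝ)) := by
  rw [log_decomp n hn, Finset.mul_sum]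
  refine Finset.sum_congr rfl fun p hp => ?_
  have hpp := Nat.prime_of_mem_primeFactors hp
  have hco : Nat.Coprime (p ^ n.factorization p) (n / p ^ n.factorization p) :=
    (Nat.coprime_ordCompl hpp hn).pow_left _
  have h := hmult _ _ hco
  rw [Nat.ordProj_mul_ordCompl_eq_self] at h
  rw [h]; ring


lemma lemA (g : ℕ → ℝ) (hg0 : ∀ n, 0 ≤ g n)
    (hmult : ∀ m n : ℕ, Nat.Coprime m n → g (m * n) = g m * g n)
    (x : ℝ) (Δ S : ℝ) (hΔ : 0 ≤ Δ)
    (hQ : ∀ y : ℝ, 1 ≤ y → y ≤ x →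
      (∑ q ∈ (Finset.range (⌊y⌋₊ + 1)).filter IsPrimePow, g q * Real.log q) ≤ Δ * y)
    (hS : ∀ Y : ℕ, (Y : ℝ) ≤ x → (∑ n ∈ Finset.Icc 1 Y, g n / n) ≤ S)
    (y : ℝ) (hy1 : 1 ≤ y) (hyx : y ≤ x) :
    ∑ n ∈ Finset.Icc 2 ⌊y⌋₊, g n * Real.log n ≤ Δ * y * S := by
  set Y := ⌊y⌋₊ with hY
  have hy0 : (0:ℝ) ≤ y := by linarith
  have hYy : (Y : ℝ) ≤ y := Nat.floor_le hy0
  set A := (Finset.Icc 2 Y).sigma (fun n => n.primeFactors) with hA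
  set f : (Σ _ : ℕ, ℕ) → ℝ := fun np =>
    g (np.1 / np.2 ^ np.1.factorization np.2) *
      (g (np.2 ^ np.1.factorization np.2) *
        Real.log ((np.2 ^ np.1.factorization np.2 : ℕ) : ℝ)) with hf
  have step1 : ∑ n ∈ Finset.Icc 2 Y, g n * Real.log n = ∑ np ∈ A, f np := by
    rw [hA, ← Finset.sum_sigma' (Finset.Icc 2 Y) (fun n => n.primeFactors)
      (fun n p => g (n / p ^ n.factorization p) *
        (g (p ^ n.factorization p) * Real.log ((p ^ n.factorization p : ℕ) : ℝ)))]
    refine Finset.sum_congr rfl fun n hn => ?_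
    have hn2 : 2 ≤ n := (Finset.mem_Icc.mp hn).1
    exact term_decomp g hmult n (by omega)
  rw [step1]
  set e : (Σ _ : ℕ, ℕ) → (Σ _ : ℕ, ℕ) :=
    fun np => ⟨np.1 / np.2 ^ np.1.factorization np.2, np.2 ^ np.1.factorization np.2⟩ with he
  set F : (Σ _ : ℕ, ℕ) → ℝ := fun mq => g mq.1 * (g mq.2 * Real.log (mq.2 : ℝ)) with hF
  have hinj : ∀ a ∈ A, ∀ b ∈ A, e a = e b → a = b := by
    rintro ⟨n₁, p₁⟩ ha ⟨n₂, p₂⟩ hb hab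
    simp only [hA, Finset.mem_sigma, Finset.mem_Icc] at ha hb
    have hp₁ := Nat.prime_of_mem_primeFactors ha.2
    have hp₂ := Nat.prime_of_mem_primeFactors hb.2
    have hν₁ : n₁.factorization p₁ ≠ 0 := by
      rw [← Finsupp.mem_support_iff, Nat.support_factorization]; exact ha.2
    simp only [he, Sigma.mk.inj_iff, heq_eq_eq] at hab
    obtain ⟨hm, hq⟩ := hab
    have hpq : p₁ = p₂ := by
      have h1 : p₁ ∣ p₂ ^ n₂.factorization p₂ := by
        rw [← hq]; exact dvd_pow_self p₁ hν₁
      exact (Nat.prime_dvd_prime_iff_eq hp₁ hp₂).mp (hp₁.dvd_of_dvd_pow h1)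
    have hn : n₁ = n₂ := by
      rw [← Nat.ordProj_mul_ordCompl_eq_self n₁ p₁, hm, hq,
        Nat.ordProj_mul_ordCompl_eq_self n₂ p₂]
    subst hpq hn; rfl
  have step2 : ∑ np ∈ A, f np = ∑ mq ∈ A.image e, F mq := by
    rw [Finset.sum_image hinj]
  rw [step2]
  set T := (Finset.Icc 1 Y).sigma
    (fun m => (Finset.range (⌊y / (m : ℝ)⌋₊ + 1)).filter IsPrimePow) with hT
  have hnonneg : ∀ mq ∈ T, 0 ≤ F mq := by
    rintro ⟨m, q⟩ hmq
    simp only [hT, Finset.mem_sigma, Finset.mem_filter] at hmq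
    have hq2 : 2 ≤ q := hmq.2.2.two_le
    have : (0:ℝ) ≤ Real.log q :=
      Real.log_nonneg (by exact_mod_cast Nat.one_le_iff_ne_zero.mpr (by omega))
    exact mul_nonneg (hg0 _) (mul_nonneg (hg0 _) this)
  have hsub : A.image e ⊆ T := by
    intro mq hmq
    obtain ⟨⟨n, p⟩, hnp, rfl⟩ := Finset.mem_image.mp hmq
    simp only [hA, Finset.mem_sigma, Finset.mem_Icc] at hnp
    have hp := Nat.prime_of_mem_primeFactors hnp.2
    have hn0 : n ≠ 0 := by omega
    have hν : n.factorization p ≠ 0 := by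
      rw [← Finsupp.mem_support_iff, Nat.support_factorization]; exact hnp.2
    have hm1 : 1 ≤ n / p ^ n.factorization p := Nat.ordCompl_pos p hn0
    have hmY : n / p ^ n.factorization p ≤ Y := le_trans (Nat.ordCompl_le n p) hnp.1.2
    simp only [hT, Finset.mem_sigma, Finset.mem_Icc, Finset.mem_filter, Finset.mem_range,
      Nat.lt_succ_iff]
    refine ⟨⟨hm1, hmY⟩, ?_, ⟨p, n.factorization p, hp.prime, Nat.pos_of_ne_zero hν, rfl⟩⟩
    apply Nat.le_floor
    rw [le_div_iff₀ (by exact_mod_cast hm1 : (0:ℝ) < (n / p ^ n.factorization p : ℕ))]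
    have : ((p ^ n.factorization p : ℕ) : ℝ) * ((n / p ^ n.factorization p : ℕ) : ℝ) = (n : ℝ) := by
      rw [← Nat.cast_mul, Nat.ordProj_mul_ordCompl_eq_self]
    rw [this]
    calc (n:ℝ) ≤ (Y:ℝ) := by exact_mod_cast hnp.1.2
    _ ≤ y := hYy
  have step3 : ∑ mq ∈ A.image e, F mq ≤ ∑ mq ∈ T, F mq :=
    Finset.sum_le_sum_of_subset_of_nonneg hsub (fun i hi _ => hnonneg i hi)
  have step4 : ∑ mq ∈ T, F mq =
      ∑ m ∈ Finset.Icc 1 Y, g m *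
        ∑ q ∈ (Finset.range (⌊y / (m : ℝ)⌋₊ + 1)).filter IsPrimePow, g q * Real.log q := by
    rw [hT, ← Finset.sum_sigma' (Finset.Icc 1 Y) _ (fun m q => F ⟨m, q⟩)]
    exact Finset.sum_congr rfl fun m _ => by rw [Finset.mul_sum]
  have step5 : ∑ m ∈ Finset.Icc 1 Y, g m *
        ∑ q ∈ (Finset.range (⌊y / (m : ℝ)⌋₊ + 1)).filter IsPrimePow, g q * Real.log q
      ≤ ∑ m ∈ Finset.Icc 1 Y, g m * (Δ * (y / (m : ℝ))) := by
    refine Finset.sum_le_sum fun m hm => ?_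
    obtain ⟨hm1, hmY⟩ := Finset.mem_Icc.mp hm
    have hm0 : (0:ℝ) < (m:ℝ) := by exact_mod_cast hm1
    have h1 : 1 ≤ y / (m:ℝ) := by
      rw [le_div_iff₀ hm0, one_mul]
      calc (m:ℝ) ≤ (Y:ℝ) := by exact_mod_cast hmY
      _ ≤ y := hYy
    have h2 : y / (m:ℝ) ≤ x :=
      le_trans (div_le_self hy0 (by exact_mod_cast hm1)) hyx
    exact mul_le_mul_of_nonneg_left (hQ _ h1 h2) (hg0 m)
  have step6 : ∑ m ∈ Finset.Icc 1 Y, g m * (Δ * (y / (m : ℝ)))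
      = Δ * y * ∑ m ∈ Finset.Icc 1 Y, g m / (m : ℝ) := by
    rw [Finset.mul_sum]
    exact Finset.sum_congr rfl fun m _ => by ring
  have step7 : Δ * y * ∑ m ∈ Finset.Icc 1 Y, g m / (m : ℝ) ≤ Δ * y * S :=
    mul_le_mul_of_nonneg_left (hS Y (le_trans hYy hyx)) (mul_nonneg hΔ hy0)
  linarith [step3, step4.le, step5, step6.le, step7, step4.ge, step6.ge]

private lemma tele (n k : ℕ) (h : n ≤ k) :
    ∑ j ∈ Finset.Ico n k, (Real.log ((j+1 : ℕ) : ℝ) - Real.log (j : ℝ))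
      = Real.log k - Real.log n := by
  rw [Finset.sum_Ico_eq_sum_range]
  have h2 : n + (k - n) = k := by omega
  have h3 := Finset.sum_range_sub (fun i => Real.log ((n + i : ℕ) : ℝ)) (k - n)
  simp only [Nat.add_zero] at h3
  rw [h2] at h3
  rw [← h3]
  refine Finset.sum_congr rfl fun i _ => ?_
  have h4 : n + i + 1 = n + (i + 1) := by omega
  simp only [h4]

lemma swaplem (k : ℕ) (f : ℕ → ℕ → ℝ) :
    ∑ n ∈ Finset.Icc 2 k, ∑ j ∈ Finset.Ico n k, f n j
      = ∑ j ∈ Finset.Ico 2 k, ∑ n ∈ Finset.Icc 2 j, f n j :=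
  Finset.sum_comm' (by intro n j; simp only [Finset.mem_Icc, Finset.mem_Ico]; omega)

lemma logc_nonneg (j : ℕ) : 0 ≤ Real.log ((j+1 : ℕ) : ℝ) - Real.log (j : ℝ) := by
  rcases Nat.eq_zero_or_pos j with rfl | hj
  · simp
  · have h : (j : ℝ) ≤ ((j+1 : ℕ) : ℝ) := by push_cast; linarith
    exact sub_nonneg.mpr (Real.log_le_log (by exact_mod_cast hj) h)

lemma logc_le (j : ℕ) (hj : 1 ≤ j) :
    Real.log ((j+1 : ℕ) : ℝ) - Real.log (j : ℝ) ≤ 1 / j := by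
  have hj0 : (0:ℝ) < j := by exact_mod_cast hj
  have h1 : Real.log ((j+1 : ℕ) : ℝ) - Real.log (j : ℝ) = Real.log (((j:ℝ)+1) / j) := by
    rw [Real.log_div (by positivity) (by positivity)]; push_cast; ring
  rw [h1]
  have := Real.log_le_sub_one_of_pos (show (0:ℝ) < ((j:ℝ)+1)/j by positivity)
  have h2 : ((j:ℝ)+1)/j - 1 = 1/j := by field_simp; ring
  linarith

-- level 1
lemma lemB (g : ℕ → ℝ) (hg0 : ∀ n, 0 ≤ g n) (x D : ℝ)
    (hA : ∀ k : ℕ, (k:ℝ) ≤ x → ∑ n ∈ Finset.Icc 2 k, g n * Real.log n ≤ D * k)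
    (k : ℕ) (hk : (k:ℝ) ≤ x) :
    Real.log 2 * ∑ n ∈ Finset.Icc 2 k, g n ≤ D * k := by
  refine le_trans ?_ (hA k hk)
  rw [Finset.mul_sum]
  refine Finset.sum_le_sum fun n hn => ?_
  have hn2 : 2 ≤ n := (Finset.mem_Icc.mp hn).1
  have h1 : Real.log 2 ≤ Real.log n :=
    Real.log_le_log (by norm_num) (by exact_mod_cast hn2)
  have := hg0 n
  nlinarith [Real.log_nonneg (show (1:ℝ) ≤ 2 by norm_num)]

-- level 2
lemma lemC (g : ℕ → ℝ) (hg0 : ∀ n, 0 ≤ g n) (x D : ℝ) (hD : 0 ≤ D)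
    (hA : ∀ k : ℕ, (k:ℝ) ≤ x → ∑ n ∈ Finset.Icc 2 k, g n * Real.log n ≤ D * k)
    (k : ℕ) (hk : (k:ℝ) ≤ x) :
    Real.log k * ∑ n ∈ Finset.Icc 2 k, g n ≤ D * k * (1 + 1 / Real.log 2) := by
  have hl2 : (0:ℝ) < Real.log 2 := Real.log_pos (by norm_num)
  rcases lt_or_ge k 2 with hk2 | hk2
  · interval_cases k <;> simp <;> positivity
  -- decomposition
  have hdecomp : Real.log k * ∑ n ∈ Finset.Icc 2 k, g n
      = (∑ n ∈ Finset.Icc 2 k, g n * Real.log n)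
        + ∑ j ∈ Finset.Ico 2 k, (Real.log ((j+1:ℕ):ℝ) - Real.log (j:ℝ))
            * ∑ n ∈ Finset.Icc 2 j, g n := by
    rw [Finset.mul_sum]
    have h1 : ∀ n ∈ Finset.Icc 2 k, Real.log k * g n
        = g n * Real.log n + ∑ j ∈ Finset.Ico n k, g n * (Real.log ((j+1:ℕ):ℝ) - Real.log (j:ℝ)) := by
      intro n hn
      obtain ⟨hn2, hnk⟩ := Finset.mem_Icc.mp hn
      rw [← Finset.mul_sum, tele n k hnk]
      ring
    rw [Finset.sum_congr rfl h1, Finset.sum_add_distrib]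
    congr 1
    rw [swaplem k (fun n j => g n * (Real.log ((j+1:ℕ):ℝ) - Real.log (j:ℝ)))]
    exact Finset.sum_congr rfl fun j _ => by rw [← Finset.sum_mul]; ring
  rw [hdecomp]
  have hmid : ∑ j ∈ Finset.Ico 2 k, (Real.log ((j+1:ℕ):ℝ) - Real.log (j:ℝ))
      * ∑ n ∈ Finset.Icc 2 j, g n ≤ k * (D / Real.log 2) := by
    have hcard : ((Finset.Ico 2 k).card : ℝ) ≤ (k:ℝ) := by
      rw [Nat.card_Ico]; exact_mod_cast Nat.sub_le k 2
    calc ∑ j ∈ Finset.Ico 2 k, (Real.log ((j+1:ℕ):ℝ) - Real.log (j:ℝ))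
          * ∑ n ∈ Finset.Icc 2 j, g n
        ≤ ∑ j ∈ Finset.Ico 2 k, D / Real.log 2 := by
          refine Finset.sum_le_sum fun j hj => ?_
          obtain ⟨hj2, hjk⟩ := Finset.mem_Ico.mp hj
          have hjx : (j:ℝ) ≤ x := le_trans (by exact_mod_cast hjk.le) hk
          have hG0 : 0 ≤ ∑ n ∈ Finset.Icc 2 j, g n :=
            Finset.sum_nonneg fun n _ => hg0 n
          have hG : ∑ n ∈ Finset.Icc 2 j, g n ≤ D * j / Real.log 2 := by
            rw [le_div_iff₀ hl2]
            linarith [lemB g hg0 x D hA j hjx]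
          have hj0 : (0:ℝ) < j := by exact_mod_cast (by omega : 0 < j)
          calc (Real.log ((j+1:ℕ):ℝ) - Real.log (j:ℝ)) * ∑ n ∈ Finset.Icc 2 j, g n
              ≤ (1/(j:ℝ)) * (D * j / Real.log 2) :=
                mul_le_mul (logc_le j (by omega)) hG hG0 (by positivity)
            _ = D / Real.log 2 := by field_simp
        _ = ((Finset.Ico 2 k).card : ℝ) * (D / Real.log 2) := by
            rw [Finset.sum_const, nsmul_eq_mul]
        _ ≤ k * (D / Real.log 2) := by
            have : (0:ℝ) ≤ D / Real.log 2 := by positivity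
            nlinarith
  have htop := hA k hk
  have : D * k + k * (D / Real.log 2) = D * k * (1 + 1/Real.log 2) := by field_simp
  linarith

lemma lemE (g : ℕ → ℝ) (hg0 : ∀ n, 0 ≤ g n) (x D : ℝ) (hD : 0 ≤ D)
    (hA : ∀ k : ℕ, (k:ℝ) ≤ x → ∑ n ∈ Finset.Icc 2 k, g n * Real.log n ≤ D * k)
    (k : ℕ) (hk : (k:ℝ) ≤ x) (hk2 : 2 ≤ k) :
    Real.log k * ∑ n ∈ Finset.Icc 2 k, g n
      ≤ D * k + ∑ j ∈ Finset.Ico 2 k, D * (1 + 1 / Real.log 2) * (1 / Real.log (j:ℝ)) := by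
  have hl2 : (0:ℝ) < Real.log 2 := Real.log_pos (by norm_num)
  have hdecomp : Real.log k * ∑ n ∈ Finset.Icc 2 k, g n
      = (∑ n ∈ Finset.Icc 2 k, g n * Real.log n)
        + ∑ j ∈ Finset.Ico 2 k, (Real.log ((j+1:ℕ):ℝ) - Real.log (j:ℝ))
            * ∑ n ∈ Finset.Icc 2 j, g n := by
    rw [Finset.mul_sum]
    have h1 : ∀ n ∈ Finset.Icc 2 k, Real.log k * g n
        = g n * Real.log n + ∑ j ∈ Finset.Ico n k, g n * (Real.log ((j+1:ℕ):ℝ) - Real.log (j:ℝ)) := by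
      intro n hn
      obtain ⟨hn2, hnk⟩ := Finset.mem_Icc.mp hn
      rw [← Finset.mul_sum, tele n k hnk]
      ring
    rw [Finset.sum_congr rfl h1, Finset.sum_add_distrib]
    congr 1
    rw [swaplem k (fun n j => g n * (Real.log ((j+1:ℕ):ℝ) - Real.log (j:ℝ)))]
    exact Finset.sum_congr rfl fun j _ => by rw [← Finset.sum_mul]; ring
  rw [hdecomp]
  have hmid : ∑ j ∈ Finset.Ico 2 k, (Real.log ((j+1:ℕ):ℝ) - Real.log (j:ℝ))
      * ∑ n ∈ Finset.Icc 2 j, g n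
      ≤ ∑ j ∈ Finset.Ico 2 k, D * (1 + 1 / Real.log 2) * (1 / Real.log (j:ℝ)) := by
    refine Finset.sum_le_sum fun j hj => ?_
    obtain ⟨hj2, hjk⟩ := Finset.mem_Ico.mp hj
    have hjx : (j:ℝ) ≤ x := le_trans (by exact_mod_cast hjk.le) hk
    have hj0 : (0:ℝ) < j := by exact_mod_cast (by omega : 0 < j)
    have hlogj : (0:ℝ) < Real.log j :=
      Real.log_pos (by exact_mod_cast (by omega : 1 < j))
    have hG0 : 0 ≤ ∑ n ∈ Finset.Icc 2 j, g n := Finset.sum_nonneg fun n _ => hg0 n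
    have hG : ∑ n ∈ Finset.Icc 2 j, g n ≤ D * j * (1 + 1/Real.log 2) / Real.log j := by
      rw [le_div_iff₀ hlogj]
      linarith [lemC g hg0 x D hD hA j hjx]
    calc (Real.log ((j+1:ℕ):ℝ) - Real.log (j:ℝ)) * ∑ n ∈ Finset.Icc 2 j, g n
        ≤ (1/(j:ℝ)) * (D * j * (1 + 1/Real.log 2) / Real.log j) :=
          mul_le_mul (logc_le j (by omega)) hG hG0 (by positivity)
      _ = D * (1 + 1 / Real.log 2) * (1 / Real.log (j:ℝ)) := by field_simp
  linarith [hA k hk]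


lemma loglem (u : ℝ) (hu : 0 < u) : Real.log u ≤ u / Real.exp 1 := by
  have h1 : Real.log (u / Real.exp 1) ≤ u / Real.exp 1 - 1 :=
    Real.log_le_sub_one_of_pos (by positivity)
  rw [Real.log_div (ne_of_gt hu) (by positivity), Real.log_exp] at h1
  linarith

lemma lemD (x : ℝ) (hx : 2 ≤ x) :
    ∑ j ∈ Finset.Icc 2 ⌊x⌋₊, 1 / Real.log (j : ℝ)
      ≤ Real.sqrt x / Real.log 2 + 2 * x / Real.log x := by
  have hx0 : (0:ℝ) < x := by linarith
  have hL : 0 < Real.log x := Real.log_pos (by linarith)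
  have hl2 : (0:ℝ) < Real.log 2 := Real.log_pos (by norm_num)
  have hsx : (0:ℝ) ≤ Real.sqrt x := Real.sqrt_nonneg x
  set N := ⌊x⌋₊ with hN
  set M := ⌊Real.sqrt x⌋₊ with hM
  rw [← Finset.sum_filter_add_sum_filter_not (Finset.Icc 2 N) (· ≤ M)]
  have part1 : ∑ j ∈ (Finset.Icc 2 N).filter (· ≤ M), 1 / Real.log (j:ℝ)
      ≤ Real.sqrt x / Real.log 2 := by
    have hsub : (Finset.Icc 2 N).filter (· ≤ M) ⊆ Finset.Icc 2 M := by
      intro j hj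
      simp only [Finset.mem_filter, Finset.mem_Icc] at hj ⊢
      omega
    have hcard : (((Finset.Icc 2 N).filter (· ≤ M)).card : ℝ) ≤ Real.sqrt x := by
      calc (((Finset.Icc 2 N).filter (· ≤ M)).card : ℝ) ≤ ((Finset.Icc 2 M).card : ℝ) := by
            exact_mod_cast Finset.card_le_card hsub
        _ ≤ (M : ℝ) := by rw [Nat.card_Icc]; exact_mod_cast (by omega : M + 1 - 2 ≤ M)
        _ ≤ Real.sqrt x := Nat.floor_le hsx
    calc ∑ j ∈ (Finset.Icc 2 N).filter (· ≤ M), 1 / Real.log (j:ℝ)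
        ≤ ∑ j ∈ (Finset.Icc 2 N).filter (· ≤ M), 1 / Real.log 2 := by
          refine Finset.sum_le_sum fun j hj => ?_
          have hj2 : 2 ≤ j := (Finset.mem_Icc.mp (Finset.mem_filter.mp hj).1).1
          have : Real.log 2 ≤ Real.log j :=
            Real.log_le_log (by norm_num) (by exact_mod_cast hj2)
          exact one_div_le_one_div_of_le hl2 this
      _ = (((Finset.Icc 2 N).filter (· ≤ M)).card : ℝ) * (1 / Real.log 2) := by
          rw [Finset.sum_const, nsmul_eq_mul]
      _ ≤ Real.sqrt x * (1 / Real.log 2) := by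
          apply mul_le_mul_of_nonneg_right hcard (by positivity)
      _ = Real.sqrt x / Real.log 2 := by ring
  have part2 : ∑ j ∈ (Finset.Icc 2 N).filter (¬ · ≤ M), 1 / Real.log (j:ℝ)
      ≤ 2 * x / Real.log x := by
    have hcard : (((Finset.Icc 2 N).filter (¬ · ≤ M)).card : ℝ) ≤ x := by
      calc (((Finset.Icc 2 N).filter (¬ · ≤ M)).card : ℝ) ≤ ((Finset.Icc 2 N).card : ℝ) := by
            exact_mod_cast Finset.card_le_card (Finset.filter_subset _ _)
        _ ≤ (N : ℝ) := by rw [Nat.card_Icc]; exact_mod_cast (by omega : N + 1 - 2 ≤ N)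
        _ ≤ x := Nat.floor_le (le_of_lt hx0)
    calc ∑ j ∈ (Finset.Icc 2 N).filter (¬ · ≤ M), 1 / Real.log (j:ℝ)
        ≤ ∑ j ∈ (Finset.Icc 2 N).filter (¬ · ≤ M), 2 / Real.log x := by
          refine Finset.sum_le_sum fun j hj => ?_
          simp only [Finset.mem_filter, Finset.mem_Icc, decide_eq_true_eq] at hj
          have hjM : M < j := by omega
          have hsj : Real.sqrt x < (j:ℝ) := by
            have := (Nat.floor_lt hsx).mp hjM
            exact_mod_cast this
          have hlog : Real.log x / 2 ≤ Real.log j := by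
            rw [← Real.log_sqrt (le_of_lt hx0)]
            exact Real.log_le_log (Real.sqrt_pos.mpr hx0) (le_of_lt hsj)
          have h2 : 0 < Real.log x / 2 := by positivity
          calc 1 / Real.log (j:ℝ) ≤ 1 / (Real.log x / 2) :=
                one_div_le_one_div_of_le h2 hlog
            _ = 2 / Real.log x := by field_simp
      _ = (((Finset.Icc 2 N).filter (¬ · ≤ M)).card : ℝ) * (2 / Real.log x) := by
          rw [Finset.sum_const, nsmul_eq_mul]
      _ ≤ x * (2 / Real.log x) := mul_le_mul_of_nonneg_right hcard (by positivity)
      _ = 2 * x / Real.log x := by ring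
  linarith

lemma hnumlem (x : ℝ) (hx : 2 ≤ x) :
  (1 + 1 / Real.log 2) * (Real.sqrt x / Real.log 2 + 2 * x / Real.log x)
    ≤ 10 * x / Real.log x := by
  have hx0 : (0:ℝ) < x := by linarith
  have hl2 : (0:ℝ) < Real.log 2 := Real.log_pos (by norm_num)
  obtain ⟨L, hLdef⟩ : ∃ L, L = Real.log x := ⟨_, rfl⟩
  obtain ⟨c, hcdef⟩ : ∃ c, c = 1 + 1 / Real.log 2 := ⟨_, rfl⟩
  rw [← hLdef, ← hcdef]
  have hL : (0:ℝ) < L := hLdef ▸ Real.log_pos (by linarith)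
  have hc0 : (0:ℝ) < c := by rw [hcdef]; positivity
  have he : (2.7182818283 : ℝ) < Real.exp 1 := Real.exp_one_gt_d9
  have hl2a : (0.6931471803 : ℝ) < Real.log 2 := Real.log_two_gt_d9
  have hsx0 : (0:ℝ) ≤ Real.sqrt x := Real.sqrt_nonneg x
  have hsl : Real.sqrt x * L ≤ 2 * x / Real.exp 1 := by
    have h1 : Real.log (Real.sqrt x) ≤ Real.sqrt x / Real.exp 1 :=
      loglem _ (Real.sqrt_pos.mpr hx0)
    have h2 : L = 2 * Real.log (Real.sqrt x) := by
      rw [hLdef, Real.log_sqrt (le_of_lt hx0)]; ring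
    have h3 : Real.sqrt x * Real.sqrt x = x := Real.mul_self_sqrt (le_of_lt hx0)
    calc Real.sqrt x * L = 2 * (Real.sqrt x * Real.log (Real.sqrt x)) := by
          rw [h2]; ring
      _ ≤ 2 * (Real.sqrt x * (Real.sqrt x / Real.exp 1)) := by
          apply mul_le_mul_of_nonneg_left _ (by norm_num)
          exact mul_le_mul_of_nonneg_left h1 hsx0
      _ = 2 * x / Real.exp 1 := by rw [mul_div_assoc', h3, mul_div_assoc]
  have hsx2 : Real.sqrt x ≤ 2 * x / (Real.exp 1 * L) := by
    rw [le_div_iff₀ (by positivity)]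
    have : Real.sqrt x * (Real.exp 1 * L) = (Real.sqrt x * L) * Real.exp 1 := by ring
    rw [this]
    calc (Real.sqrt x * L) * Real.exp 1 ≤ (2 * x / Real.exp 1) * Real.exp 1 :=
          mul_le_mul_of_nonneg_right hsl (le_of_lt (Real.exp_pos 1))
      _ = 2 * x := div_mul_cancel₀ _ (ne_of_gt (Real.exp_pos 1))
  have hc1 : c ≤ 2.4427 := by
    rw [hcdef]
    have : 1 / Real.log 2 ≤ 1.4427 := by
      rw [div_le_iff₀ hl2]; nlinarith
    linarith
  have expand : c * (Real.sqrt x / Real.log 2 + 2 * x / L)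
      = c * Real.sqrt x / Real.log 2 + 2 * c * x / L := by ring
  have hkey : c * Real.sqrt x / Real.log 2 ≤ (10 - 2 * c) * x / L := by
    rw [div_le_div_iff₀ hl2 hL]
    have h6 : c * Real.sqrt x * L ≤ c * (2 * x / Real.exp 1) := by
      have : c * Real.sqrt x * L = c * (Real.sqrt x * L) := by ring
      rw [this]
      exact mul_le_mul_of_nonneg_left hsl (le_of_lt hc0)
    have h7 : c * (2 * x / Real.exp 1) ≤ (10 - 2 * c) * x * Real.log 2 := by
      rw [mul_div_assoc', div_le_iff₀ (Real.exp_pos 1)]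
      have hA1 : (5.1146:ℝ) ≤ 10 - 2 * c := by linarith
      have hA2 : (1.8841:ℝ) ≤ Real.log 2 * Real.exp 1 := by
        have h9 := mul_le_mul (le_of_lt hl2a) (le_of_lt he) (by norm_num) (le_of_lt hl2)
        nlinarith
      have hA3 : (9.6:ℝ) ≤ (10 - 2 * c) * (Real.log 2 * Real.exp 1) := by
        have h9 := mul_le_mul hA1 hA2 (show (0:ℝ) ≤ 1.8841 by norm_num)
          (show (0:ℝ) ≤ 10 - 2 * c by linarith)
        nlinarith
      have hA4 := mul_le_mul_of_nonneg_left hA3 (le_of_lt hx0)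
      nlinarith [hA4, mul_nonneg (sub_nonneg.mpr hc1) (le_of_lt hx0)]
    linarith
  have h8 : 10 * x / L = (10 - 2 * c) * x / L + 2 * c * x / L := by ring
  linarith


theorem sum_le_delta_sum
    (g : ℕ → ℝ) (hg0 : ∀ n, 0 ≤ g n) (hg1 : g 1 = 1)
    (hmult : ∀ m n : ℕ, Nat.Coprime m n → g (m * n) = g m * g n)
    (x : ℝ) (hx : 2 ≤ x) :
    ∑ n ∈ Finset.Icc 2 ⌊x⌋₊, g n ≤
      (x / Real.log x + 10 * x / (Real.log x) ^ 2) *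
        (⨆ y : Set.Icc (1 : ℝ) x,
          (y : ℝ)⁻¹ * ∑ q ∈ (Finset.range (⌊(y : ℝ)⌋₊ + 1)).filter IsPrimePow,
            g q * Real.log q) *
        ∑ n ∈ Finset.Icc 1 ⌊x⌋₊, g n / n := by
  have hx0 : (0:ℝ) < x := by linarith
  have hL : (0:ℝ) < Real.log x := Real.log_pos (by linarith)
  have hl2 : (0:ℝ) < Real.log 2 := Real.log_pos (by norm_num)
  set L := Real.log x with hLdef
  set N := ⌊x⌋₊ with hNdef
  have hN2 : 2 ≤ N := Nat.le_floor (by exact_mod_cast hx)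
  have hNx : (N:ℝ) ≤ x := Nat.floor_le (le_of_lt hx0)
  have hN0 : (0:ℝ) < (N:ℝ) := by exact_mod_cast (by omega : 0 < N)
  have hxN1 : x < (N:ℝ) + 1 := by exact_mod_cast Nat.lt_floor_add_one x
  set Δ := (⨆ y : Set.Icc (1 : ℝ) x,
      (y : ℝ)⁻¹ * ∑ q ∈ (Finset.range (⌊(y : ℝ)⌋₊ + 1)).filter IsPrimePow,
        g q * Real.log q) with hΔdef
  set S := ∑ n ∈ Finset.Icc 1 N, g n / n with hSdef
  -- nonnegativity of Q-sums
  have hQnn : ∀ y : ℝ, 0 ≤ ∑ q ∈ (Finset.range (⌊y⌋₊ + 1)).filter IsPrimePow,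
      g q * Real.log q := fun y =>
    Finset.sum_nonneg fun q _ => mul_nonneg (hg0 q) (Real.log_natCast_nonneg q)
  have hQmono : ∀ y : ℝ, y ≤ x →
      (∑ q ∈ (Finset.range (⌊y⌋₊ + 1)).filter IsPrimePow, g q * Real.log q)
        ≤ ∑ q ∈ (Finset.range (N + 1)).filter IsPrimePow, g q * Real.log q := by
    intro y hy
    refine Finset.sum_le_sum_of_subset_of_nonneg ?_
      (fun q _ _ => mul_nonneg (hg0 q) (Real.log_natCast_nonneg q))
    apply Finset.filter_subset_filter
    apply Finset.range_subset_range.mpr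
    have h9 : ⌊y⌋₊ ≤ N := Nat.floor_le_floor hy
    exact Nat.succ_le_succ h9
  have hbdd : BddAbove (Set.range fun y : Set.Icc (1 : ℝ) x =>
      (y : ℝ)⁻¹ * ∑ q ∈ (Finset.range (⌊(y : ℝ)⌋₊ + 1)).filter IsPrimePow,
        g q * Real.log q) := by
    refine ⟨∑ q ∈ (Finset.range (N + 1)).filter IsPrimePow, g q * Real.log q, ?_⟩
    rintro _ ⟨⟨y, hy1, hyx⟩, rfl⟩
    have hy0 : (0:ℝ) < y := by linarith
    calc (y : ℝ)⁻¹ * ∑ q ∈ (Finset.range (⌊(y : ℝ)⌋₊ + 1)).filter IsPrimePow,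
          g q * Real.log q
        ≤ 1 * ∑ q ∈ (Finset.range (⌊(y : ℝ)⌋₊ + 1)).filter IsPrimePow,
          g q * Real.log q := by
          apply mul_le_mul_of_nonneg_right _ (hQnn y)
          rw [inv_le_one_iff₀]; right; exact hy1
      _ = _ := one_mul _
      _ ≤ _ := hQmono y hyx
  have hΔ0 : 0 ≤ Δ := by
    have hmem : (1:ℝ) ∈ Set.Icc (1:ℝ) x := ⟨le_refl 1, by linarith⟩
    have h1 := le_ciSup hbdd (⟨1, hmem⟩ : Set.Icc (1:ℝ) x)
    have h2 : ((Finset.range (⌊(1:ℝ)⌋₊ + 1)).filter IsPrimePow) = ∅ := by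
      norm_num [Nat.floor_one]
      decide
    rw [← hΔdef] at h1
    have h3 : (Finset.range 2).filter IsPrimePow = ∅ := by
      norm_num
      decide
    simpa [h2, h3] using h1
  have hQle : ∀ y : ℝ, 1 ≤ y → y ≤ x →
      (∑ q ∈ (Finset.range (⌊y⌋₊ + 1)).filter IsPrimePow, g q * Real.log q) ≤ Δ * y := by
    intro y hy1 hyx
    have hy0 : (0:ℝ) < y := by linarith
    have h1 := le_ciSup hbdd ⟨y, hy1, hyx⟩
    rw [← hΔdef] at h1
    calc (∑ q ∈ (Finset.range (⌊y⌋₊ + 1)).filter IsPrimePow, g q * Real.log q)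
        = y * ((y:ℝ)⁻¹ * ∑ q ∈ (Finset.range (⌊y⌋₊ + 1)).filter IsPrimePow,
            g q * Real.log q) := by field_simp
      _ ≤ y * Δ := mul_le_mul_of_nonneg_left h1 (le_of_lt hy0)
      _ = Δ * y := mul_comm _ _
  have hS0 : 0 ≤ S :=
    Finset.sum_nonneg fun n _ => div_nonneg (hg0 n) (Nat.cast_nonneg n)
  have hSle : ∀ Y : ℕ, (Y : ℝ) ≤ x → (∑ n ∈ Finset.Icc 1 Y, g n / n) ≤ S := by
    intro Y hY
    refine Finset.sum_le_sum_of_subset_of_nonneg ?_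
      (fun n _ _ => div_nonneg (hg0 n) (Nat.cast_nonneg n))
    apply Finset.Icc_subset_Icc_right
    exact Nat.le_floor hY
  set D := Δ * S with hDdef
  have hD0 : 0 ≤ D := mul_nonneg hΔ0 hS0
  have hA : ∀ k : ℕ, (k:ℝ) ≤ x → ∑ n ∈ Finset.Icc 2 k, g n * Real.log n ≤ D * k := by
    intro k hk
    rcases Nat.eq_zero_or_pos k with rfl | hk1
    · simp
    · have h1 := lemA g hg0 hmult x Δ S hΔ0 hQle hSle k
        (by exact_mod_cast hk1) hk
      rw [Nat.floor_natCast] at h1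
      calc ∑ n ∈ Finset.Icc 2 k, g n * Real.log n ≤ Δ * k * S := h1
        _ = D * k := by rw [hDdef]; ring
  -- top-level bound on the log-weighted sum
  have htop : ∑ n ∈ Finset.Icc 2 N, g n * Real.log n ≤ D * x := by
    have h1 := lemA g hg0 hmult x Δ S hΔ0 hQle hSle x (by linarith) le_rfl
    calc ∑ n ∈ Finset.Icc 2 N, g n * Real.log n ≤ Δ * x * S := h1
      _ = D * x := by rw [hDdef]; ring
  set G := ∑ n ∈ Finset.Icc 2 N, g n with hGdef
  have hG0 : 0 ≤ G := Finset.sum_nonneg fun n _ => hg0 n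
  have hlogN : (0:ℝ) < Real.log N :=
    Real.log_pos (by exact_mod_cast (by omega : 1 < N))
  have hLlogN0 : Real.log N ≤ L := Real.log_le_log hN0 hNx
  set c := 1 + 1 / Real.log 2 with hcdef
  clear_value L N Δ S D G c
  have hc0 : (0:ℝ) < c := by rw [hcdef]; positivity
  -- step: log N * G ≤ D * x + ∑_{j ∈ Ico 2 N} D*c/log j
  have hstep1 : Real.log N * G ≤ D * x
      + ∑ j ∈ Finset.Ico 2 N, D * c * (1 / Real.log (j:ℝ)) := by
    have := lemE g hg0 x D hD0 hA N hNx hN2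
    have hDN : D * N ≤ D * x := mul_le_mul_of_nonneg_left hNx hD0
    rw [← hGdef, ← hcdef] at this
    linarith
  -- step: (L - log N) * G ≤ D * c * (1/log N)
  have hstep2 : (L - Real.log N) * G ≤ D * c * (1 / Real.log N) := by
    have hLN : L - Real.log N ≤ 1 / N := by
      have h1 : L - Real.log N = Real.log (x / N) := by
        rw [hLdef, Real.log_div (ne_of_gt hx0) (ne_of_gt hN0)]
      have h2 : Real.log (x / N) ≤ x / N - 1 :=
        Real.log_le_sub_one_of_pos (by positivity)
      have h3 : x / N - 1 ≤ 1 / N := by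
        rw [div_sub_one (ne_of_gt hN0), div_le_div_iff₀ hN0 hN0]
        nlinarith
      linarith
    have hGb : G ≤ D * N * c / Real.log N := by
      rw [le_div_iff₀ hlogN]
      have := lemC g hg0 x D hD0 hA N hNx
      rw [← hGdef, ← hcdef] at this
      linarith
    have hLN0 : 0 ≤ L - Real.log N := by linarith
    calc (L - Real.log N) * G ≤ (1 / N) * (D * N * c / Real.log N) :=
          mul_le_mul hLN hGb hG0 (by positivity)
      _ = D * c * (1 / Real.log N) := by field_simp
  -- combine the Ico sum and the extra term into an Icc sum
  have hcomb : ∑ j ∈ Finset.Ico 2 N, D * c * (1 / Real.log (j:ℝ))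
      + D * c * (1 / Real.log N)
      = D * c * ∑ j ∈ Finset.Icc 2 N, 1 / Real.log (j:ℝ) := by
    rw [Finset.mul_sum]
    rw [← Finset.Ico_insert_right hN2, Finset.sum_insert (by simp)]
    ring
  -- the 1/log sum bound
  have hsum := lemD x hx
  rw [← hNdef] at hsum
  rw [← hLdef] at hsum
  have hnum := hnumlem x hx
  rw [← hLdef, ← hcdef] at hnum
  -- final combination
  have hfinal : L * G ≤ D * (x + 10 * x / L) := by
    have h1 : L * G = Real.log N * G + (L - Real.log N) * G := by ring
    have h2 : D * c * ∑ j ∈ Finset.Icc 2 N, 1 / Real.log (j:ℝ)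
        ≤ D * c * (Real.sqrt x / Real.log 2 + 2 * x / L) := by
      apply mul_le_mul_of_nonneg_left hsum (by positivity)
    have h3 : D * c * (Real.sqrt x / Real.log 2 + 2 * x / L) ≤ D * (10 * x / L) := by
      have := mul_le_mul_of_nonneg_left hnum hD0
      calc D * c * (Real.sqrt x / Real.log 2 + 2 * x / L)
          = D * (c * (Real.sqrt x / Real.log 2 + 2 * x / L)) := by ring
        _ ≤ D * (10 * x / L) := this
    have h4 := hstep1
    have h5 := hstep2
    have h6 := hcomb
    linarith [h2, h3]
  -- conclude
  have hRHSL : (x / L + 10 * x / L ^ 2) * Δ * S * L = D * (x + 10 * x / L) := by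
    rw [hDdef]; field_simp
  have hGL : G * L ≤ ((x / L + 10 * x / L ^ 2) * Δ * S) * L := by
    rw [mul_comm G L]
    calc L * G ≤ D * (x + 10 * x / L) := hfinal
      _ = (x / L + 10 * x / L ^ 2) * Δ * S * L := hRHSL.symm
  exact le_of_mul_le_mul_right hGL hL
end

section
/- There exists a constant C > 0 such that for every ε ∈ (0,1) and every real x ≥ 2, the sum over primes p > x^ε of p^{-1}·exp(−log p / log x) is at most C/ε. -/
open Finset Real

lemma key_rpow (δ t : ℝ) (hδ : 0 < δ) (ht : 1 ≤ t) :
    (t+1) ^ (-(1+δ)) ≤ (1/δ) * (t ^ (-δ) - (t+1) ^ (-δ)) := by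
  have ht0 : (0:ℝ) < t := by linarith
  have ht1 : (0:ℝ) < t + 1 := by linarith
  have htp : (0:ℝ) < t ^ δ := rpow_pos_of_pos ht0 _
  have htp1 : (0:ℝ) < (t+1) ^ δ := rpow_pos_of_pos ht1 _
  have hPQ : t ^ δ ≤ (t+1) ^ δ := rpow_le_rpow ht0.le (by linarith) hδ.le
  have star : δ * t ^ δ ≤ (t+1) * ((t+1) ^ δ - t ^ δ) := by
    rcases le_or_gt 1 δ with hδ1 | hδ1
    · have hs : (-1:ℝ) ≤ 1/t := by
        have : (0:ℝ) < 1/t := by positivity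
        linarith
      have hb : 1 + δ * (1/t) ≤ (1 + 1/t) ^ δ :=
        one_add_mul_self_le_rpow_one_add hs hδ1
      have h1 : (1 + 1/t) ^ δ = (t+1) ^ δ / t ^ δ := by
        rw [show (1 : ℝ) + 1/t = (t+1)/t by field_simp, Real.div_rpow (by linarith) ht0.le]
      rw [h1] at hb
      have h2 : (1 + δ * (1/t)) * t ^ δ ≤ (t+1) ^ δ := by
        have := mul_le_mul_of_nonneg_right hb htp.le
        rwa [div_mul_cancel₀ _ htp.ne'] at this
      have h4 : t ^ δ * t + δ * t ^ δ ≤ (t+1) ^ δ * t := by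
        have := mul_le_mul_of_nonneg_right h2 ht0.le
        calc t ^ δ * t + δ * t ^ δ = (1 + δ * (1/t)) * t ^ δ * t := by field_simp
          _ ≤ (t+1) ^ δ * t := this
      nlinarith
    · have hs : (-1:ℝ) ≤ -(1/(t+1)) := by
        have : 1/(t+1) ≤ 1 := by rw [div_le_one ht1]; linarith
        linarith
      have hb : (1 + (-(1/(t+1)))) ^ δ ≤ 1 + δ * (-(1/(t+1))) :=
        rpow_one_add_le_one_add_mul_self hs hδ.le hδ1.le
      have h1 : (1 + (-(1/(t+1)))) = t/(t+1) := by field_simp; ring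
      rw [h1, Real.div_rpow ht0.le ht1.le] at hb
      have h3 : t ^ δ ≤ (t+1) ^ δ * (1 - δ/(t+1)) := by
        have := mul_le_mul_of_nonneg_right hb htp1.le
        rw [div_mul_cancel₀ _ htp1.ne'] at this
        calc t ^ δ ≤ (1 + δ * (-(1/(t+1)))) * (t+1)^δ := this
          _ = (t+1) ^ δ * (1 - δ/(t+1)) := by ring
      have h4 : t ^ δ * (t+1) ≤ (t+1) ^ δ * ((t+1) - δ) := by
        have := mul_le_mul_of_nonneg_right h3 ht1.le
        calc t ^ δ * (t+1) ≤ (t+1) ^ δ * (1 - δ/(t+1)) * (t+1) := this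
          _ = (t+1) ^ δ * ((t+1) - δ) := by field_simp
      nlinarith
  have e1 : (t+1) ^ (-(1+δ)) = ((t+1) ^ (1+δ))⁻¹ := by rw [Real.rpow_neg ht1.le]
  have e2 : (t:ℝ) ^ (-δ) = (t ^ δ)⁻¹ := by rw [Real.rpow_neg ht0.le]
  have e3 : (t+1) ^ (-δ) = ((t+1) ^ δ)⁻¹ := by rw [Real.rpow_neg ht1.le]
  have e4 : (t+1) ^ (1+δ) = (t+1) * (t+1) ^ δ := by
    rw [Real.rpow_add ht1, Real.rpow_one]
  rw [e1, e2, e3, e4]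
  set P := t ^ δ
  set Q := (t+1) ^ δ
  have h : (P⁻¹ - Q⁻¹) = (Q - P)/(P*Q) := by field_simp
  rw [h, div_mul_div_comm, one_mul, inv_eq_one_div,
    div_le_div_iff₀ (by positivity) (by positivity)]
  nlinarith [mul_le_mul_of_nonneg_right star htp1.le]

lemma abel_aux (a w : ℕ → ℝ) (c : ℝ)
    (hA : ∀ N : ℕ, ∑ n ∈ Finset.range N, a n ≤ c * N)
    (hw0 : ∀ n, 0 ≤ w n) (hwm : ∀ n, w (n+1) ≤ w n) :
    ∀ N : ℕ, ∑ n ∈ Finset.range N, a n * w n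
      + (c * N - ∑ n ∈ Finset.range N, a n) * w N ≤ c * ∑ n ∈ Finset.range N, w n := by
  intro N
  induction N with
  | zero => simp
  | succ N ih =>
    rw [Finset.sum_range_succ, Finset.sum_range_succ, Finset.sum_range_succ (f := w)]
    push_cast
    have h1 : 0 ≤ c * (N+1) - (∑ n ∈ Finset.range N, a n + a N) := by
      have := hA (N+1)
      rw [Finset.sum_range_succ] at this
      push_cast at this
      linarith
    nlinarith [mul_le_mul_of_nonneg_left (hwm N) h1, hw0 N, hw0 (N+1)]

lemma zeta_aux (δ : ℝ) (hδ : 0 < δ) (N : ℕ) :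
    ∑ n ∈ Finset.range N, (if n = 0 then (1:ℝ) else (n:ℝ) ^ (-(1+δ))) ≤ 2 + 1/δ := by
  set w : ℕ → ℝ := fun n => if n = 0 then (1:ℝ) else (n:ℝ) ^ (-(1+δ)) with hw
  have key : ∀ M : ℕ, ∑ n ∈ Finset.range (M+2), w n
      ≤ 2 + (1/δ) * (1 - ((M:ℝ)+1) ^ (-δ)) := by
    intro M
    induction M with
    | zero =>
      norm_num [hw, Finset.sum_range_succ]
    | succ M ih =>
      push_cast
      rw [Finset.sum_range_succ]
      have ht1 : (1:ℝ) ≤ (M:ℝ)+1 := by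
        have : (0:ℝ) ≤ (M:ℝ) := Nat.cast_nonneg M
        linarith
      have hterm : w (M+2) ≤ (1/δ) * (((M:ℝ)+1) ^ (-δ) - ((M:ℝ)+1+1) ^ (-δ)) :=
        by
        have h := key_rpow δ ((M:ℝ)+1) hδ ht1
        have e : w (M+2) = ((M:ℝ)+1+1) ^ (-(1+δ)) := by
          simp only [hw]
          rw [if_neg (by omega)]
          push_cast
          congr 1
          ring
        rw [e]
        exact h
      linarith
  match N with
  | 0 => simp; positivity
  | 1 =>
    simp [hw]
    have : 0 < δ⁻¹ := by positivity
    linarith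
  | (M+2) =>
    have h := key M
    have hpos : (0:ℝ) ≤ ((M:ℝ)+1) ^ (-δ) := Real.rpow_nonneg (by positivity) _
    have h2 : (1/δ) * (1 - ((M:ℝ)+1) ^ (-δ)) ≤ (1/δ) * 1 :=
      mul_le_mul_of_nonneg_left (by linarith) (by positivity)
    rw [mul_one] at h2
    linarith

lemma theta_aux (N : ℕ) :
    ∑ n ∈ Finset.range N, (if n.Prime then Real.log n else 0) ≤ Real.log 4 * N := by
  rw [← Finset.sum_filter]
  have h1 : ∑ n ∈ (Finset.range N).filter Nat.Prime, Real.log n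
      = Real.log (((Finset.range N).filter Nat.Prime).prod (fun n => (n:ℝ))) := by
    rw [Real.log_prod]
    intro p hp
    simp only [Finset.mem_filter] at hp
    exact_mod_cast hp.2.pos.ne'
  rw [h1, ← Nat.cast_prod]
  have h2 : ((Finset.range N).filter Nat.Prime).prod id ≤ 4 ^ N := by
    calc ((Finset.range N).filter Nat.Prime).prod id
        ≤ ((Finset.range (N+1)).filter Nat.Prime).prod id := by
          apply Finset.prod_le_prod_of_subset_of_one_le'
          · exact Finset.filter_subset_filter _ (by simp [Finset.range_subset]; intro x hx; omega)
          · intro i hi _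
            simp only [Finset.mem_filter] at hi
            exact hi.2.one_lt.le
      _ = primorial N := rfl
      _ ≤ 4 ^ N := primorial_le_4_pow N
  have h3 : Real.log (((Finset.range N).filter Nat.Prime).prod id : ℕ)
      ≤ Real.log ((4:ℝ) ^ N) := by
    have hpos : 0 < ((Finset.range N).filter Nat.Prime).prod id :=
      Finset.prod_pos (fun i hi => (Finset.mem_filter.1 hi).2.pos)
    apply Real.log_le_log (by exact_mod_cast hpos)
    · exact_mod_cast h2
  calc Real.log ((((Finset.range N).filter Nat.Prime).prod (fun n => n) : ℕ) : ℝ)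
      ≤ Real.log ((4:ℝ) ^ N) := h3
    _ = Real.log 4 * N := by rw [Real.log_pow]; ring

theorem tsum_primes_exp_bound :
    ∃ C : ℝ, 0 < C ∧ ∀ ε : ℝ, 0 < ε → ε < 1 → ∀ x : ℝ, 2 ≤ x →
      (∑' p : Nat.Primes,
          (if x ^ ε < (p : ℕ) then
            Real.exp (-Real.log (p : ℕ) / Real.log x) / (p : ℕ) else 0)) ≤ C / ε := by
  refine ⟨10, by norm_num, ?_⟩
  intro ε hε hε1 x hx
  have hl2 : (0.6931471803 : ℝ) < Real.log 2 := Real.log_two_gt_d9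
  have hl2' : Real.log 2 < 0.6931471808 := Real.log_two_lt_d9
  set L := Real.log x with hLdef
  have hL : Real.log 2 ≤ L := Real.log_le_log (by norm_num) hx
  have hL0 : 0 < L := by linarith
  set δ : ℝ := 1 / L with hδdef
  have hδ : 0 < δ := by positivity
  set a : ℕ → ℝ := fun n => if n.Prime then Real.log n else 0 with ha
  set w : ℕ → ℝ := fun n => if n = 0 then (1:ℝ) else (n:ℝ) ^ (-(1+δ)) with hwdef
  have hw0 : ∀ n, 0 ≤ w n := by
    intro n
    simp only [hwdef]
    split
    · norm_num
    · exact Real.rpow_nonneg (Nat.cast_nonneg n) _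
  have hwm : ∀ n : ℕ, w (n+1) ≤ w n := by
    intro n
    simp only [hwdef]
    rcases Nat.eq_zero_or_pos n with h0 | h0
    · subst h0
      norm_num [Real.one_rpow]
    · rw [if_neg (by omega), if_neg (by omega)]
      have h1 : (1:ℝ) ≤ (n:ℝ) := by exact_mod_cast h0
      have h2 : ((n:ℝ)) ^ (1+δ) ≤ ((n:ℝ)+1) ^ (1+δ) :=
        Real.rpow_le_rpow (by linarith) (by linarith) (by linarith)
      rw [Real.rpow_neg (by linarith), Real.rpow_neg (by linarith)]
      push_cast
      apply inv_anti₀ (Real.rpow_pos_of_pos (by linarith) _) h2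
  have ha0 : ∀ n, 0 ≤ a n := by
    intro n
    simp only [ha]
    split
    · rename_i hp
      exact Real.log_nonneg (by exact_mod_cast hp.one_lt.le)
    · exact le_rfl
  -- finite sum bound for a*w
  have habel : ∀ N : ℕ, ∑ n ∈ Finset.range N, a n * w n ≤ Real.log 4 * (2 + L) := by
    intro N
    have hA : ∀ M : ℕ, ∑ n ∈ Finset.range M, a n ≤ Real.log 4 * M := theta_aux
    have h1 := abel_aux a w (Real.log 4) hA hw0 hwm N
    have h2 : 0 ≤ (Real.log 4 * N - ∑ n ∈ Finset.range N, a n) * w N :=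
      mul_nonneg (by linarith [hA N]) (hw0 N)
    have h3 : ∑ n ∈ Finset.range N, w n ≤ 2 + 1/δ := zeta_aux δ hδ N
    have hlog4 : 0 ≤ Real.log 4 := Real.log_nonneg (by norm_num)
    have h4 : Real.log 4 * ∑ n ∈ Finset.range N, w n ≤ Real.log 4 * (2 + 1/δ) :=
      mul_le_mul_of_nonneg_left h3 hlog4
    have h5 : (1:ℝ)/δ = L := by
      rw [hδdef, one_div_one_div]
    rw [h5] at h4
    linarith
  -- pointwise bound on primes above x^ε
  set F : ℕ → ℝ := fun n =>
    if x ^ ε < (n:ℝ) then Real.exp (-Real.log n / L) / n else 0 with hFdef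
  have hεL : 0 < ε * L := by positivity
  have hpoint : ∀ n : ℕ, n.Prime → F n ≤ a n * w n * (1/(ε*L)) := by
    intro n hn
    have hn2 : (2:ℝ) ≤ (n:ℝ) := by exact_mod_cast hn.two_le
    have hn0 : (0:ℝ) < (n:ℝ) := by linarith
    simp only [hFdef]
    split
    · rename_i hlt
      -- ε * L < log n
      have hx0 : (0:ℝ) < x := by linarith
      have hlog : ε * L < Real.log n := by
        have h1 : Real.log (x ^ ε) < Real.log n :=
          Real.log_lt_log (Real.rpow_pos_of_pos hx0 ε) hlt
        rwa [Real.log_rpow hx0] at h1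
      -- exp(-log n / L)/n = w n
      have hwn : Real.exp (-Real.log n / L) / n = w n := by
        simp only [hwdef]
        rw [if_neg hn.pos.ne']
        rw [Real.rpow_def_of_pos hn0]
        rw [show Real.log (n:ℝ) * (-(1+δ)) = -Real.log n / L + (-Real.log n) by
          rw [hδdef]; field_simp; ring]
        rw [Real.exp_add, Real.exp_neg, Real.exp_log hn0]
        ring
      rw [hwn]
      have han : a n = Real.log n := by simp [ha, hn]
      rw [han]
      have h1 : 1 ≤ Real.log n * (1/(ε*L)) := by
        rw [mul_one_div, le_div_iff₀ hεL, one_mul]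
        exact hlog.le
      calc w n = w n * 1 := by ring
        _ ≤ w n * (Real.log n * (1/(ε*L))) := by
            apply mul_le_mul_of_nonneg_left h1 (hw0 n)
        _ = Real.log n * w n * (1/(ε*L)) := by ring
    · exact mul_nonneg (mul_nonneg (ha0 n) (hw0 n)) (by positivity)
  -- conclude via tsum_le_of_sum_le'
  apply tsum_le_of_sum_le' (by positivity)
  intro s
  have hs : ∑ p ∈ s, (if x ^ ε < ((p:ℕ):ℝ) then
      Real.exp (-Real.log (p:ℕ) / L) / ((p:ℕ):ℝ) else 0)
      = ∑ n ∈ s.image (fun p : Nat.Primes => (p:ℕ)), F n := by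
    exact (Finset.sum_image (f := F) (g := fun p : Nat.Primes => (p:ℕ)) (fun p _ q _ h => Nat.Primes.coe_nat_injective h)).symm
  rw [hs]
  obtain ⟨N, hN⟩ := Finset.exists_nat_subset_range (s.image (fun p : Nat.Primes => (p:ℕ)))
  have step1 : ∑ n ∈ s.image (fun p : Nat.Primes => (p:ℕ)), F n
      ≤ ∑ n ∈ s.image (fun p : Nat.Primes => (p:ℕ)), a n * w n * (1/(ε*L)) := by
    apply Finset.sum_le_sum
    intro n hn
    obtain ⟨p, _, rfl⟩ := Finset.mem_image.1 hn
    exact hpoint _ p.2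
  have step2 : ∑ n ∈ s.image (fun p : Nat.Primes => (p:ℕ)), a n * w n * (1/(ε*L))
      ≤ ∑ n ∈ Finset.range N, a n * w n * (1/(ε*L)) := by
    apply Finset.sum_le_sum_of_subset_of_nonneg hN
    intro n _ _
    exact mul_nonneg (mul_nonneg (ha0 n) (hw0 n)) (by positivity)
  have step3 : ∑ n ∈ Finset.range N, a n * w n * (1/(ε*L))
      ≤ (Real.log 4 * (2 + L)) * (1/(ε*L)) := by
    rw [← Finset.sum_mul]
    exact mul_le_mul_of_nonneg_right (habel N) (by positivity)
  have step4 : (Real.log 4 * (2 + L)) * (1/(ε*L)) ≤ 10 / ε := by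
    have hlog4 : Real.log 4 = 2 * Real.log 2 := by
      rw [show (4:ℝ) = 2^(2:ℕ) by norm_num, Real.log_pow]
      push_cast
      ring
    have hnum : Real.log 4 * (2 + L) ≤ 10 * L := by
      rw [hlog4]
      nlinarith
    calc (Real.log 4 * (2 + L)) * (1/(ε*L)) ≤ (10 * L) * (1/(ε*L)) :=
        mul_le_mul_of_nonneg_right hnum (by positivity)
      _ = 10 / ε := by field_simp
  linarith
end

section
/- Suppose g is a non-negative function on primes with g(p) ≤ β, h is a complex-valued function on primes with |h(p)| ≤ g(p), and the series Σ_p p^{-1}(g(p) − Re h(p)) converges. Then for every fixed β' ≥ 1, Σ_{x < p ≤ x^{β'}} p^{-1} Im(h(p)) → 0 as x → ∞. -/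
open Finset Filter

lemma log_primorial_le (n : ℕ) :
    ∑ p ∈ (Finset.range (n+1)).filter Nat.Prime, Real.log p ≤ n * Real.log 4 := by
  have h0 : ∀ p ∈ (Finset.range (n+1)).filter Nat.Prime, ((p : ℝ)) ≠ 0 := by
    intro p hp
    simp only [mem_filter] at hp
    exact_mod_cast hp.2.pos.ne'
  have h2 : Real.log (primorial n) = ∑ p ∈ (Finset.range (n+1)).filter Nat.Prime, Real.log p := by
    rw [primorial]
    push_cast
    exact Real.log_prod h0
  have h1 : Real.log (primorial n) ≤ Real.log ((4:ℝ)^n) := by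
    apply Real.log_le_log (by exact_mod_cast (primorial_pos n))
    exact_mod_cast primorial_le_4_pow n
  rw [h2, Real.log_pow] at h1
  exact_mod_cast h1

lemma block_sum_le (k : ℕ) (hk : 1 ≤ k) :
    ∑ p ∈ (Finset.Ico (2^k) (2^(k+1))).filter Nat.Prime, (1:ℝ)/p
      ≤ 2 * Real.log 4 / (k * Real.log 2) := by
  set s := (Finset.Ico (2^k) (2^(k+1))).filter Nat.Prime with hs
  have hmem : ∀ p ∈ s, 2^k ≤ p ∧ p < 2^(k+1) ∧ p.Prime := by
    intro p hp; simp only [hs, mem_filter, Finset.mem_Ico] at hp; tauto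
  have hlog2pos : (0:ℝ) < Real.log 2 := Real.log_pos (by norm_num)
  have hlog4pos : (0:ℝ) < Real.log 4 := Real.log_pos (by norm_num)
  have hcard : (s.card : ℝ) * ((k:ℝ) * Real.log 2) ≤ (2:ℝ)^(k+1) * Real.log 4 := by
    have h1 : s.card • ((k:ℝ) * Real.log 2) ≤ ∑ p ∈ s, Real.log p := by
      apply Finset.card_nsmul_le_sum
      intro p hp
      obtain ⟨h1, _, hp'⟩ := hmem p hp
      calc (k : ℝ) * Real.log 2 = Real.log ((2:ℝ)^k) := by rw [Real.log_pow]
      _ ≤ Real.log p := Real.log_le_log (by positivity) (by exact_mod_cast h1)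
    rw [nsmul_eq_mul] at h1
    refine h1.trans ?_
    have h2 : ∑ p ∈ s, Real.log p ≤ ∑ p ∈ (Finset.range (2^(k+1)+1)).filter Nat.Prime, Real.log p := by
      apply Finset.sum_le_sum_of_subset_of_nonneg
      · intro p hp
        obtain ⟨_, h2, hp'⟩ := hmem p hp
        simp only [mem_filter, Finset.mem_range]
        exact ⟨by omega, hp'⟩
      · intro p hp _
        simp only [mem_filter] at hp
        exact Real.log_nonneg (by exact_mod_cast hp.2.one_lt.le)
    refine h2.trans ((log_primorial_le _).trans_eq ?_)
    push_cast; ring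
  have hsum : ∑ p ∈ s, (1:ℝ)/p ≤ s.card • ((1:ℝ)/2^k) := by
    apply Finset.sum_le_card_nsmul
    intro p hp
    obtain ⟨h1, _, hp'⟩ := hmem p hp
    apply div_le_div_of_nonneg_left one_pos.le (by positivity)
    exact_mod_cast h1
  rw [nsmul_eq_mul] at hsum
  refine hsum.trans ?_
  have hkpos : (0:ℝ) < (k:ℝ) * Real.log 2 := by positivity
  have : (s.card : ℝ) ≤ (2:ℝ)^(k+1) * Real.log 4 / ((k:ℝ) * Real.log 2) :=
    (le_div_iff₀ hkpos).mpr hcard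
  calc (s.card:ℝ) * (1/2^k) ≤ ((2:ℝ)^(k+1) * Real.log 4 / ((k:ℝ) * Real.log 2)) * (1/2^k) := by
        apply mul_le_mul_of_nonneg_right this (by positivity)
  _ = 2 * Real.log 4 / ((k:ℝ) * Real.log 2) := by
        rw [pow_succ]; field_simp

lemma mertens_upper (β' : ℝ) (hβ' : 1 ≤ β') (x : ℝ) (hx : 4 ≤ x) :
    ∑ p ∈ (Finset.range (⌊x ^ β'⌋₊ + 1)).filter
        (fun p => Nat.Prime p ∧ x < p ∧ (p : ℝ) ≤ x ^ β'), (1:ℝ)/p ≤ 8*(β'+1) := by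
  have hx0 : (0:ℝ) < x := by linarith
  have hlog2pos : (0:ℝ) < Real.log 2 := Real.log_pos (by norm_num)
  set t : ℝ := Real.log x / Real.log 2 with ht
  have ht2 : 2 ≤ t := by
    rw [ht, le_div_iff₀ hlog2pos]
    calc 2 * Real.log 2 = Real.log 4 := by
          rw [show (4:ℝ) = 2^2 by norm_num, Real.log_pow]; push_cast; ring
    _ ≤ Real.log x := Real.log_le_log (by norm_num) hx
  set k0 : ℕ := ⌊t⌋₊ with hk0
  set k1 : ℕ := ⌊β' * t⌋₊ with hk1
  have hk01 : k0 ≤ k1 := Nat.floor_le_floor (le_mul_of_one_le_left (by linarith) hβ')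
  have hk0ge : 1 ≤ k0 := by
    have : (1:ℕ) ≤ ⌊t⌋₊ := Nat.le_floor (by push_cast; linarith)
    exact this
  set F := (Finset.range (⌊x ^ β'⌋₊ + 1)).filter
      (fun p => Nat.Prime p ∧ x < p ∧ (p : ℝ) ≤ x ^ β') with hF
  have hmaps : ∀ p ∈ F, Nat.log 2 p ∈ Finset.Icc k0 k1 := by
    intro p hp
    simp only [hF, mem_filter] at hp
    obtain ⟨_, hpp, hxp, hpx⟩ := hp
    have hp0 : p ≠ 0 := hpp.pos.ne'
    have h2k : 2 ^ (Nat.log 2 p) ≤ p := Nat.pow_log_le_self 2 hp0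
    have h2k' : p < 2 ^ (Nat.log 2 p + 1) := Nat.lt_pow_succ_log_self (by norm_num) p
    simp only [Finset.mem_Icc]
    constructor
    · -- k0 ≤ log
      have hr : Real.log x < ((Nat.log 2 p : ℝ) + 1) * Real.log 2 := by
        calc Real.log x < Real.log p := Real.log_lt_log hx0 hxp
        _ ≤ Real.log ((2:ℝ) ^ (Nat.log 2 p + 1)) :=
            Real.log_le_log (by exact_mod_cast hpp.pos) (by exact_mod_cast h2k'.le)
        _ = ((Nat.log 2 p : ℝ) + 1) * Real.log 2 := by rw [Real.log_pow]; push_cast; ring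
      have : t < (Nat.log 2 p : ℝ) + 1 := by
        rw [ht, div_lt_iff₀ hlog2pos]; linarith
      have h3 : (k0 : ℝ) < (Nat.log 2 p : ℝ) + 1 := lt_of_le_of_lt (Nat.floor_le (by positivity)) this
      exact_mod_cast Nat.lt_add_one_iff.mp (by exact_mod_cast h3)
    · -- log ≤ k1
      apply Nat.le_floor
      have hr : (Nat.log 2 p : ℝ) * Real.log 2 ≤ β' * Real.log x := by
        calc (Nat.log 2 p : ℝ) * Real.log 2 = Real.log ((2:ℝ) ^ Nat.log 2 p) := by
              rw [Real.log_pow]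
        _ ≤ Real.log p := Real.log_le_log (by positivity) (by exact_mod_cast h2k)
        _ ≤ Real.log (x ^ β') := Real.log_le_log (by exact_mod_cast hpp.pos) hpx
        _ = β' * Real.log x := Real.log_rpow hx0 β'
      rw [ht, ← mul_div_assoc, le_div_iff₀ hlog2pos]
      exact hr
  have hsplit : ∑ p ∈ F, (1:ℝ)/p =
      ∑ k ∈ Finset.Icc k0 k1, ∑ p ∈ F.filter (fun p => Nat.log 2 p = k), (1:ℝ)/p :=
    (Finset.sum_fiberwise_of_maps_to hmaps _).symm
  rw [hsplit]
  have hinner : ∀ k ∈ Finset.Icc k0 k1,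
      ∑ p ∈ F.filter (fun p => Nat.log 2 p = k), (1:ℝ)/p ≤ 2 * Real.log 4 / (k0 * Real.log 2) := by
    intro k hk
    simp only [Finset.mem_Icc] at hk
    have hk1' : 1 ≤ k := le_trans hk0ge hk.1
    have hsub : F.filter (fun p => Nat.log 2 p = k) ⊆ (Finset.Ico (2^k) (2^(k+1))).filter Nat.Prime := by
      intro p hp
      simp only [hF, mem_filter, Finset.mem_Ico] at hp ⊢
      obtain ⟨⟨_, hpp, _, _⟩, hlog⟩ := hp
      subst hlog
      exact ⟨⟨Nat.pow_log_le_self 2 hpp.pos.ne', Nat.lt_pow_succ_log_self (by norm_num) p⟩, hpp⟩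
    calc ∑ p ∈ F.filter (fun p => Nat.log 2 p = k), (1:ℝ)/p
        ≤ ∑ p ∈ (Finset.Ico (2^k) (2^(k+1))).filter Nat.Prime, (1:ℝ)/p :=
          Finset.sum_le_sum_of_subset_of_nonneg hsub (fun p _ _ => by positivity)
    _ ≤ 2 * Real.log 4 / (k * Real.log 2) := block_sum_le k hk1'
    _ ≤ 2 * Real.log 4 / (k0 * Real.log 2) := by
        apply div_le_div_of_nonneg_left (by positivity) (by positivity)
        have : (k0:ℝ) ≤ (k:ℝ) := by exact_mod_cast hk.1
        nlinarith [Real.log_pos (show (1:ℝ) < 2 by norm_num)]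
  calc ∑ k ∈ Finset.Icc k0 k1, ∑ p ∈ F.filter (fun p => Nat.log 2 p = k), (1:ℝ)/p
      ≤ ∑ k ∈ Finset.Icc k0 k1, (2 * Real.log 4 / (k0 * Real.log 2)) :=
        Finset.sum_le_sum hinner
  _ = (k1 + 1 - k0 : ℝ) * (2 * Real.log 4 / (k0 * Real.log 2)) := by
        rw [Finset.sum_const, Nat.card_Icc, nsmul_eq_mul]
        congr 1
        have : k0 ≤ k1 + 1 := by omega
        push_cast [Nat.cast_sub this]
        ring
  _ ≤ 8*(β'+1) := by
        have hlog4 : Real.log 4 = 2 * Real.log 2 := by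
          rw [show (4:ℝ) = 2^2 by norm_num, Real.log_pow]; push_cast; ring
        have h1 : (k1:ℝ) ≤ β' * t := Nat.floor_le (by positivity)
        have h2 : t - 1 ≤ (k0:ℝ) := by
          have := Nat.sub_one_lt_floor t
          linarith [this.le]
        have hk0pos : (0:ℝ) < k0 := by positivity
        have hup : (k1 + 1 - k0 : ℝ) ≤ (β'+1) * t := by nlinarith
        have hlo : t/2 ≤ (k0:ℝ) := by linarith
        rw [hlog4]
        calc (k1 + 1 - k0 : ℝ) * (2 * (2*Real.log 2) / ((k0:ℝ) * Real.log 2))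
            ≤ (β'+1) * t * (2 * (2*Real.log 2) / ((k0:ℝ) * Real.log 2)) := by
              apply mul_le_mul_of_nonneg_right hup (by positivity)
        _ = (β'+1) * t * 4 / k0 := by field_simp; ring
        _ ≤ (β'+1) * t * 4 / (t/2) := by
              have hlo' : t/2 ≤ (k0:ℝ) := by linarith
              apply div_le_div_of_nonneg_left (by nlinarith) (by linarith) hlo'
        _ = 8 * (β'+1) := by field_simp; ring

theorem sum_im_tendsto_zero
    (β : ℝ) (hβ : 0 < β) (g : ℕ → ℝ) (h : ℕ → ℂ)
    (hg0 : ∀ p : ℕ, p.Prime → 0 ≤ g p)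
    (hgβ : ∀ p : ℕ, p.Prime → g p ≤ β)
    (hhg : ∀ p : ℕ, p.Prime → ‖h p‖ ≤ g p)
    (hconv : Summable (fun p : Nat.Primes => (g p - (h p).re) / (p : ℕ)))
    (β' : ℝ) (hβ' : 1 ≤ β') :
    Filter.Tendsto
      (fun x : ℝ =>
        ∑ p ∈ (Finset.range (⌊x ^ β'⌋₊ + 1)).filter
            (fun p => Nat.Prime p ∧ x < p ∧ (p : ℝ) ≤ x ^ β'),
          (h p).im / p)
      Filter.atTop (nhds 0) := by
  classical
  set d : ℕ → ℝ := fun n => g n - (h n).re with hd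
  have hd0 : ∀ p : ℕ, p.Prime → 0 ≤ d p := by
    intro p hp
    have h2 := Complex.re_le_norm (h p)
    have h1 := hhg p hp
    simp only [hd, sub_nonneg]
    linarith
  set D : ℕ → ℝ := Set.indicator {n : ℕ | n.Prime} (fun n => d n / n) with hDdef
  have hDsum : Summable D := by
    rw [← summable_subtype_iff_indicator]
    exact hconv
  have hD0 : ∀ n, 0 ≤ D n := by
    intro n
    by_cases hn : n.Prime
    · rw [hDdef, Set.indicator_of_mem (by exact hn)]
      exact div_nonneg (hd0 n hn) (Nat.cast_nonneg n)
    · rw [hDdef, Set.indicator_of_notMem (by exact hn)]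
  set R : ℕ → ℝ := fun N => ∑' n, D n - ∑ n ∈ Finset.range N, D n with hR
  have hRtend : Tendsto R atTop (nhds 0) := by
    have h1 := hDsum.hasSum.tendsto_sum_nat
    have h2 := Filter.Tendsto.sub (tendsto_const_nhds (x := ∑' n, D n)) h1
    simpa using h2
  have hR0 : ∀ N, 0 ≤ R N := fun N =>
    sub_nonneg.mpr (Summable.sum_le_tsum _ (fun i _ => hD0 i) hDsum)
  -- eventual bound
  have hbound : ∀ x : ℝ, 4 ≤ x →
      |∑ p ∈ (Finset.range (⌊x ^ β'⌋₊ + 1)).filter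
          (fun p => Nat.Prime p ∧ x < p ∧ (p : ℝ) ≤ x ^ β'), (h p).im / p|
        ≤ Real.sqrt (2*β) * Real.sqrt (R (⌊x⌋₊ + 1) * (8*(β'+1))) := by
    intro x hx
    have hx0 : (0:ℝ) ≤ x := by linarith
    set F := (Finset.range (⌊x ^ β'⌋₊ + 1)).filter
        (fun p => Nat.Prime p ∧ x < p ∧ (p : ℝ) ≤ x ^ β') with hF
    have hFmem : ∀ p ∈ F, p.Prime ∧ x < p := by
      intro p hp; simp only [hF, mem_filter] at hp; tauto
    set N := ⌊x⌋₊ + 1 with hN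
    -- tail bound
    have hFD : ∑ p ∈ F, d p / p ≤ R N := by
      have hdisj : Disjoint F (Finset.range N) := by
        rw [Finset.disjoint_right]
        intro p hp hpF
        obtain ⟨hpp, hxp⟩ := hFmem p hpF
        rw [Finset.mem_range, hN, Nat.lt_add_one_iff] at hp
        have : (⌊x⌋₊ : ℕ) < p := (Nat.floor_lt hx0).mpr hxp
        omega
      have heq : ∑ p ∈ F, d p / p = ∑ p ∈ F, D p := by
        apply Finset.sum_congr rfl
        intro p hp
        rw [hDdef, Set.indicator_of_mem (by exact (hFmem p hp).1)]
      have hle : ∑ p ∈ F ∪ Finset.range N, D p ≤ ∑' n, D n :=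
        Summable.sum_le_tsum _ (fun i _ => hD0 i) hDsum
      rw [Finset.sum_union hdisj] at hle
      rw [heq]
      have hRN : R N = ∑' n, D n - ∑ n ∈ Finset.range N, D n := rfl
      rw [hRN]
      have := Finset.sum_nonneg (fun i (_ : i ∈ Finset.range N) => hD0 i)
      linarith
    -- Mertens bound
    have hFM : ∑ p ∈ F, (1:ℝ)/p ≤ 8*(β'+1) := mertens_upper β' hβ' x hx
    -- Cauchy-Schwarz
    have hCS : (∑ p ∈ F, Real.sqrt (d p) / p)^2 ≤ (∑ p ∈ F, d p / p) * (∑ p ∈ F, (1:ℝ)/p) := by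
      apply Finset.sum_sq_le_sum_mul_sum_of_sq_eq_mul
      · intro p hp
        exact div_nonneg (hd0 p (hFmem p hp).1) (Nat.cast_nonneg p)
      · intro p hp
        positivity
      · intro p hp
        have hp0 : (0:ℝ) < p := by exact_mod_cast (hFmem p hp).1.pos
        rw [div_pow, Real.sq_sqrt (hd0 p (hFmem p hp).1), div_mul_div_comm, mul_one, sq]
    have hrsum0 : 0 ≤ ∑ p ∈ F, Real.sqrt (d p) / p :=
      Finset.sum_nonneg fun p hp => div_nonneg (Real.sqrt_nonneg _) (Nat.cast_nonneg p)
    have hrsum : ∑ p ∈ F, Real.sqrt (d p) / p ≤ Real.sqrt (R N * (8*(β'+1))) := by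
      rw [← Real.sqrt_sq hrsum0]
      apply Real.sqrt_le_sqrt
      refine hCS.trans ?_
      apply mul_le_mul hFD hFM (Finset.sum_nonneg fun p hp => by positivity) (hR0 N)
    -- pointwise bound on |Im|
    have hptw : ∀ p ∈ F, |(h p).im| ≤ Real.sqrt (2*β) * Real.sqrt (d p) := by
      intro p hp
      obtain ⟨hpp, _⟩ := hFmem p hp
      have h1 := hhg p hpp
      have h2 := Complex.re_le_norm (h p)
      have h3 := Complex.sq_norm (h p)
      have h4 : Complex.normSq (h p) = (h p).re^2 + (h p).im^2 := by
        rw [Complex.normSq_apply]; ring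
      have h5 := hgβ p hpp
      have h6 := norm_nonneg (h p)
      have him2 : (h p).im^2 ≤ 2*β*(d p) := by
        have hA : 0 ≤ (g p - ‖h p‖) * (g p + ‖h p‖) :=
          mul_nonneg (by linarith) (by linarith [hg0 p hpp])
        have hB : 0 ≤ (g p - (h p).re) * (2*β - (g p + (h p).re)) :=
          mul_nonneg (by linarith) (by linarith)
        simp only [hd]
        nlinarith
      calc |(h p).im| = Real.sqrt ((h p).im^2) := (Real.sqrt_sq_eq_abs _).symm
      _ ≤ Real.sqrt (2*β*(d p)) := Real.sqrt_le_sqrt him2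
      _ = Real.sqrt (2*β) * Real.sqrt (d p) := Real.sqrt_mul (by linarith) _
    calc |∑ p ∈ F, (h p).im / p| ≤ ∑ p ∈ F, |(h p).im / p| := Finset.abs_sum_le_sum_abs _ _
    _ = ∑ p ∈ F, |(h p).im| / p := by
        apply Finset.sum_congr rfl
        intro p hp
        rw [abs_div, Nat.abs_cast]
    _ ≤ ∑ p ∈ F, Real.sqrt (2*β) * (Real.sqrt (d p) / p) := by
        apply Finset.sum_le_sum
        intro p hp
        have hp0 : (0:ℝ) < p := by exact_mod_cast (hFmem p hp).1.pos
        rw [mul_div_assoc']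
        gcongr
        exact hptw p hp
    _ = Real.sqrt (2*β) * ∑ p ∈ F, Real.sqrt (d p) / p := by rw [Finset.mul_sum]
    _ ≤ Real.sqrt (2*β) * Real.sqrt (R N * (8*(β'+1))) :=
        mul_le_mul_of_nonneg_left hrsum (Real.sqrt_nonneg _)
  -- limit of the majorant
  have hGtend : Tendsto (fun x : ℝ => Real.sqrt (2*β) * Real.sqrt (R (⌊x⌋₊ + 1) * (8*(β'+1))))
      atTop (nhds 0) := by
    have h1 : Tendsto (fun x : ℝ => ⌊x⌋₊ + 1) atTop atTop :=
      (tendsto_add_atTop_nat 1).comp tendsto_nat_floor_atTop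
    have h2 : Tendsto (fun x : ℝ => R (⌊x⌋₊ + 1)) atTop (nhds 0) := hRtend.comp h1
    have h3 := ((h2.mul_const (8*(β'+1))).sqrt).const_mul (Real.sqrt (2*β))
    simpa using h3
  rw [tendsto_zero_iff_abs_tendsto_zero]
  apply squeeze_zero' (Eventually.of_forall fun x => abs_nonneg _) ?_ hGtend
  filter_upwards [eventually_ge_atTop (4:ℝ)] with x hx
  exact hbound x hx
end

section
/- Let g be a non-negative function on primes, bounded by β, such that the series Σ_p p^{-1}(g(p) − Re(h(p))) converges, where |h(p)| ≤ g(p). Then Σ_{p > x^ε} p^{-1−1/log x} |g(p) − h(p)| → 0 as x → ∞, for each fixed ε ∈ (0,1). -/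
private lemma theta_le (n : ℕ) :
    ∑ j ∈ Finset.range (n+1), (if j.Prime then Real.log j else 0) ≤ n * Real.log 4 := by
  have h2 : ∑ j ∈ Finset.range (n+1), (if j.Prime then Real.log j else 0)
      = Real.log (primorial n) := by
    rw [primorial, ← Finset.sum_filter]
    rw [Nat.cast_prod, Real.log_prod]
    intro p hp
    have := (Finset.mem_filter.1 hp).2.pos
    positivity
  have h3 : Real.log (primorial n) ≤ Real.log ((4:ℝ)^n) := by
    apply Real.log_le_log (by exact_mod_cast (primorial_pos n))
    exact_mod_cast primorial_le_4_pow n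
  rw [Real.log_pow] at h3
  calc _ = _ := h2
    _ ≤ _ := h3

private lemma zeta_bound {σ : ℝ} (hσ : 0 < σ) (N : ℕ) :
    ∑ m ∈ Finset.range N, ((m:ℝ)) ^ (-1-σ) ≤ 1 + 1/σ := by
  have hexp : (-1-σ) ≠ 0 := by linarith
  have hexp1 : (-1-σ) ≠ -1 := by intro hh; linarith [sub_eq_iff_eq_add.mp hh]
  have h1σ : (0:ℝ) ≤ 1/σ := by positivity
  match N with
  | 0 => simp; positivity
  | 1 => simp [Real.zero_rpow hexp]; positivity
  | 2 =>
    simp [Finset.sum_range_succ, Real.zero_rpow hexp, Real.one_rpow]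
    linarith
  | (K+3) =>
    have hanti : AntitoneOn (fun t : ℝ => t ^ (-1-σ)) (Set.Icc ((1:ℕ):ℝ) ((K+2:ℕ):ℝ)) := by
      intro a ha b hb hab
      have h1 : (0:ℝ) < a := lt_of_lt_of_le one_pos (by exact_mod_cast ha.1)
      exact Real.rpow_le_rpow_of_nonpos h1 hab (by linarith)
    have key := AntitoneOn.sum_le_integral_Ico (f := fun t : ℝ => t ^ (-1-σ))
      (a := 1) (b := K+2) (by omega) hanti
    simp only [Nat.cast_one] at key
    have hint : ∫ x in (1:ℝ)..((K+2:ℕ):ℝ), x ^ (-1-σ) ≤ 1/σ := by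
      have h12 : (1:ℝ) ≤ ((K+2:ℕ):ℝ) := by exact_mod_cast Nat.one_le_iff_ne_zero.2 (by omega)
      rw [integral_rpow (Or.inr ⟨hexp1, by
        rw [Set.uIcc_of_le h12]; intro hmem; exact absurd hmem.1 (by norm_num)⟩)]
      have he : (-1-σ) + 1 = -σ := by ring
      rw [he, Real.one_rpow]
      have hpos : (0:ℝ) ≤ ((K+2:ℕ):ℝ) ^ (-σ) := Real.rpow_nonneg (by positivity) _
      rw [div_neg, ← neg_div, neg_sub]
      gcongr
      linarith
    have hsplit : ∑ m ∈ Finset.range (K+3), ((m:ℝ)) ^ (-1-σ)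
        = 1 + ∑ i ∈ Finset.Ico 1 (K+2), (((i+1:ℕ)):ℝ) ^ (-1-σ) := by
      rw [Finset.range_eq_Ico,
        ← Finset.sum_Ico_consecutive (fun m : ℕ => ((m:ℝ))^(-1-σ)) (Nat.zero_le 2)
          (by omega : 2 ≤ K+3)]
      have e1 : ∑ m ∈ Finset.Ico (0:ℕ) 2, ((m:ℝ)) ^ (-1-σ) = 1 := by
        rw [show Finset.Ico (0:ℕ) 2 = Finset.range 2 from by rw [Finset.range_eq_Ico]]
        simp [Finset.sum_range_succ, Real.zero_rpow hexp, Real.one_rpow]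
      have e2 : ∑ m ∈ Finset.Ico (2:ℕ) (K+3), ((m:ℝ)) ^ (-1-σ)
          = ∑ i ∈ Finset.Ico 1 (K+2), (((i+1:ℕ)):ℝ) ^ (-1-σ) := by
        rw [Finset.sum_Ico_eq_sum_range, Finset.sum_Ico_eq_sum_range]
        apply Finset.sum_congr rfl
        intro i _
        congr 2
        omega
      rw [e1, e2]
    rw [hsplit]
    have := le_trans key hint
    linarith


private lemma abel_bound {σ : ℝ} (hσ : 0 < σ) (n : ℕ) :
    ∑ i ∈ Finset.range n, ((i:ℝ) ^ (-1-σ)) * (if i.Prime then Real.log i else 0)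
      ≤ Real.log 4 * (2 + 1/σ) := by
  have hexp : (-1-σ) ≠ 0 := by linarith
  have hlog4 : (0:ℝ) ≤ Real.log 4 := Real.log_nonneg (by norm_num)
  have hB : (0:ℝ) ≤ 2 + 1/σ := by positivity
  set a : ℕ → ℝ := fun i => if i.Prime then Real.log i else 0 with hadef
  set F : ℕ → ℝ := fun i => (i:ℝ) ^ (-1-σ) with hFdef
  have hFnonneg : ∀ i : ℕ, 0 ≤ F i := fun i => Real.rpow_nonneg (Nat.cast_nonneg i) _
  have hanonneg : ∀ i : ℕ, 0 ≤ a i := by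
    intro i; simp only [hadef]; split
    · exact Real.log_natCast_nonneg i
    · exact le_refl 0
  have hGnonneg : ∀ k : ℕ, 0 ≤ ∑ j ∈ Finset.range k, a j :=
    fun k => Finset.sum_nonneg fun j _ => hanonneg j
  match n with
  | 0 => simpa using by positivity
  | 1 =>
    simp only [Finset.sum_range_one, Nat.cast_zero, Real.zero_rpow hexp, zero_mul]
    positivity
  | (m+2) =>
    have hid := Finset.sum_range_by_parts F a (m+2)
    simp only [smul_eq_mul] at hid
    have hm1 : m + 2 - 1 = m + 1 := rfl
    rw [hm1] at hid
    -- boundary term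
    have hbd : F (m+1) * (∑ j ∈ Finset.range (m+2), a j) ≤ Real.log 4 := by
      have h1 : F (m+1) ≤ ((m+1:ℕ):ℝ)⁻¹ := by
        have : ((m+1:ℕ):ℝ) ^ (-1-σ) ≤ ((m+1:ℕ):ℝ) ^ (-1:ℝ) :=
          Real.rpow_le_rpow_of_exponent_le (by exact_mod_cast Nat.le_add_left 1 m)
            (by linarith)
        rwa [Real.rpow_neg_one] at this
      have h2 : (∑ j ∈ Finset.range (m+2), a j) ≤ (m+1) * Real.log 4 := by
        simpa using theta_le (m+1)
      have h3 : (0:ℝ) < ((m+1:ℕ):ℝ) := by positivity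
      calc F (m+1) * (∑ j ∈ Finset.range (m+2), a j)
          ≤ ((m+1:ℕ):ℝ)⁻¹ * (((m+1:ℕ):ℝ) * Real.log 4) := by
            apply mul_le_mul h1 (by exact_mod_cast h2) (hGnonneg _) (by positivity)
        _ = Real.log 4 := by field_simp
    -- sum term
    have hsum : ∑ i ∈ Finset.range (m+1), (F i - F (i+1)) * (∑ j ∈ Finset.range (i+1), a j)
        ≤ Real.log 4 * (1 + 1/σ) := by
      have hterm : ∀ i ∈ Finset.range (m+1),
          (F i - F (i+1)) * (∑ j ∈ Finset.range (i+1), a j)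
            ≤ Real.log 4 * ((i:ℝ) * F i - (i:ℝ) * F (i+1)) := by
        intro i _
        rcases Nat.eq_zero_or_pos i with h0 | h1
        · subst h0
          have : (∑ j ∈ Finset.range 1, a j) = 0 := by simp [hadef]
          rw [this, mul_zero]
          simp
        · have hFanti : F (i+1) ≤ F i := by
            apply Real.rpow_le_rpow_of_nonpos (by exact_mod_cast h1) (by exact_mod_cast Nat.le_succ i)
            linarith
          have hGle : (∑ j ∈ Finset.range (i+1), a j) ≤ (i:ℝ) * Real.log 4 := by
            have := theta_le i
            simpa using this
          calc (F i - F (i+1)) * (∑ j ∈ Finset.range (i+1), a j)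
              ≤ (F i - F (i+1)) * ((i:ℝ) * Real.log 4) :=
                mul_le_mul_of_nonneg_left hGle (by linarith)
            _ = Real.log 4 * ((i:ℝ) * F i - (i:ℝ) * F (i+1)) := by ring
      have htele : ∑ i ∈ Finset.range (m+1), ((i:ℝ) * F i - (i:ℝ) * F (i+1))
          ≤ 1 + 1/σ := by
        have hre : ∀ i : ℕ, (i:ℝ) * F i - (i:ℝ) * F (i+1)
            = (((i:ℝ) * F i) - (((i+1:ℕ)):ℝ) * F (i+1)) + F (i+1) := by
          intro i; push_cast; ring
        rw [Finset.sum_congr rfl (fun i _ => hre i), Finset.sum_add_distrib,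
          Finset.sum_range_sub' (fun i => (i:ℝ) * F i) (m+1)]
        have hz : ∑ j ∈ Finset.range (m+2), F j ≤ 1 + 1/σ := zeta_bound hσ (m+2)
        rw [Finset.sum_range_succ'] at hz
        have hF0 : F 0 = 0 := by simp [hFdef, Real.zero_rpow hexp]
        have : (0:ℝ) ≤ ((m+1:ℕ):ℝ) * F (m+1) := by positivity
        simp only [Nat.cast_zero, zero_mul, hF0] at *
        linarith
      calc ∑ i ∈ Finset.range (m+1), (F i - F (i+1)) * (∑ j ∈ Finset.range (i+1), a j)
          ≤ ∑ i ∈ Finset.range (m+1), Real.log 4 * ((i:ℝ) * F i - (i:ℝ) * F (i+1)) :=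
            Finset.sum_le_sum hterm
        _ = Real.log 4 * ∑ i ∈ Finset.range (m+1), ((i:ℝ) * F i - (i:ℝ) * F (i+1)) := by
            rw [Finset.mul_sum]
        _ ≤ Real.log 4 * (1 + 1/σ) := mul_le_mul_of_nonneg_left htele hlog4
    have hneg : ∑ i ∈ Finset.range (m+1), (F (i+1) - F i) * (∑ j ∈ Finset.range (i+1), a j)
        = -∑ i ∈ Finset.range (m+1), (F i - F (i+1)) * (∑ j ∈ Finset.range (i+1), a j) := by
      rw [← Finset.sum_neg_distrib]
      apply Finset.sum_congr rfl
      intros; ring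
    rw [hneg, sub_neg_eq_add] at hid
    rw [hid]
    have := add_le_add hbd hsum
    calc F (m+1) * (∑ j ∈ Finset.range (m+2), a j)
        + ∑ i ∈ Finset.range (m+1), (F i - F (i+1)) * (∑ j ∈ Finset.range (i+1), a j)
        ≤ Real.log 4 + Real.log 4 * (1 + 1/σ) := this
      _ = Real.log 4 * (2 + 1/σ) := by ring

private lemma summable_log_mul_rpow {σ : ℝ} (hσ : 0 < σ) :
    Summable (fun p : Nat.Primes => ((p:ℕ):ℝ) ^ (-1-σ) * Real.log (p:ℕ)) := by
  apply Summable.of_nonneg_of_le (fun p => by positivity) (fun p => ?_)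
    (((Nat.Primes.summable_rpow).mpr (by linarith : -1-σ/2 < -1)).mul_left (2/σ))
  have hp0 : (0:ℝ) < ((p:ℕ):ℝ) := by exact_mod_cast p.2.pos
  have hlog : Real.log ((p:ℕ):ℝ) ≤ ((p:ℕ):ℝ) ^ (σ/2) / (σ/2) :=
    Real.log_le_rpow_div (le_of_lt hp0) (by linarith)
  calc ((p:ℕ):ℝ) ^ (-1-σ) * Real.log (p:ℕ)
      ≤ ((p:ℕ):ℝ) ^ (-1-σ) * (((p:ℕ):ℝ) ^ (σ/2) / (σ/2)) :=
        mul_le_mul_of_nonneg_left hlog (Real.rpow_nonneg (le_of_lt hp0) _)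
    _ = (2/σ) * ((p:ℕ):ℝ) ^ (-1-σ/2) := by
        rw [div_eq_mul_inv, ← mul_assoc, ← Real.rpow_add hp0,
          show -1-σ+σ/2 = -1-σ/2 by ring, inv_div, mul_comm]
  -- may fail; fix later

private lemma tsum_primes_le {σ : ℝ} (hσ : 0 < σ) :
    ∑' p : Nat.Primes, (((p:ℕ):ℝ) ^ (-1-σ) * Real.log (p:ℕ)) ≤ Real.log 4 * (2 + 1/σ) := by
  apply Summable.tsum_le_of_sum_le (summable_log_mul_rpow hσ)
  intro s
  classical
  let e : Nat.Primes ↪ ℕ := ⟨fun p => (p:ℕ), Nat.Primes.coe_nat_injective⟩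
  set gg : ℕ → ℝ := fun n => ((n:ℝ) ^ (-1-σ)) * (if n.Prime then Real.log n else 0) with hgg
  have h1 : ∑ p ∈ s, (((p:ℕ):ℝ) ^ (-1-σ) * Real.log (p:ℕ)) = ∑ n ∈ s.map e, gg n := by
    rw [Finset.sum_map]
    apply Finset.sum_congr rfl
    intro p _
    simp only [hgg, e, Function.Embedding.coeFn_mk, if_pos p.2]
    change _ = ((p:ℕ):ℝ) ^ (-1-σ) * (if (p:ℕ).Prime then Real.log (p:ℕ) else 0)
    rw [if_pos p.2]
  rw [h1]
  have h2 : ∑ n ∈ s.map e, gg n ≤ ∑ n ∈ Finset.range ((s.map e).sup id + 1), gg n := by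
    apply Finset.sum_le_sum_of_subset_of_nonneg
    · intro n hn
      exact Finset.mem_range.2 (Nat.lt_succ_of_le (Finset.le_sup (f := id) hn))
    · intro n _ _
      have : 0 ≤ (if n.Prime then Real.log n else 0) := by
        split
        · exact Real.log_natCast_nonneg n
        · exact le_refl 0
      positivity
  exact le_trans h2 (abel_bound hσ _)

private lemma tail_bound {σ y : ℝ} (hσ : 0 < σ) (hy : 2 ≤ y) :
    ∑' p : Nat.Primes, (if y < ((p:ℕ):ℝ) then ((p:ℕ):ℝ) ^ (-1-σ) else 0)
      ≤ Real.log 4 * (2 + 1/σ) / Real.log y := by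
  have hly : 0 < Real.log y := Real.log_pos (by linarith)
  have hsum1 : Summable (fun p : Nat.Primes =>
      if y < ((p:ℕ):ℝ) then ((p:ℕ):ℝ) ^ (-1-σ) else 0) := by
    apply Summable.of_nonneg_of_le (fun p => by positivity) (fun p => ?_)
      ((Nat.Primes.summable_rpow).mpr (by linarith : -1-σ < -1))
    split
    · exact le_refl _
    · exact Real.rpow_nonneg (Nat.cast_nonneg _) _
  have hsum2 : Summable (fun p : Nat.Primes =>
      (Real.log y)⁻¹ * (((p:ℕ):ℝ) ^ (-1-σ) * Real.log (p:ℕ))) :=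
    (summable_log_mul_rpow hσ).mul_left _
  have hle : ∀ p : Nat.Primes, (if y < ((p:ℕ):ℝ) then ((p:ℕ):ℝ) ^ (-1-σ) else 0)
      ≤ (Real.log y)⁻¹ * (((p:ℕ):ℝ) ^ (-1-σ) * Real.log (p:ℕ)) := by
    intro p
    have hrp : (0:ℝ) ≤ ((p:ℕ):ℝ) ^ (-1-σ) := Real.rpow_nonneg (Nat.cast_nonneg _) _
    split
    case isTrue hcase =>
      calc ((p:ℕ):ℝ) ^ (-1-σ)
          = (Real.log y)⁻¹ * (((p:ℕ):ℝ) ^ (-1-σ) * Real.log y) := by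
            field_simp
        _ ≤ (Real.log y)⁻¹ * (((p:ℕ):ℝ) ^ (-1-σ) * Real.log (p:ℕ)) := by
            apply mul_le_mul_of_nonneg_left _ (by positivity)
            exact mul_le_mul_of_nonneg_left (Real.log_le_log (by linarith) (le_of_lt hcase)) hrp
    case isFalse =>
      have : (0:ℝ) ≤ Real.log ((p:ℕ):ℝ) := Real.log_natCast_nonneg _
      positivity
  calc ∑' p : Nat.Primes, (if y < ((p:ℕ):ℝ) then ((p:ℕ):ℝ) ^ (-1-σ) else 0)
      ≤ ∑' p : Nat.Primes, (Real.log y)⁻¹ * (((p:ℕ):ℝ) ^ (-1-σ) * Real.log (p:ℕ)) :=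
        Summable.tsum_le_tsum hle hsum1 hsum2
    _ = (Real.log y)⁻¹ * ∑' p : Nat.Primes, (((p:ℕ):ℝ) ^ (-1-σ) * Real.log (p:ℕ)) :=
        tsum_mul_left
    _ ≤ (Real.log y)⁻¹ * (Real.log 4 * (2 + 1/σ)) :=
        mul_le_mul_of_nonneg_left (tsum_primes_le hσ) (by positivity)
    _ = Real.log 4 * (2 + 1/σ) / Real.log y := by ring

private lemma summable_tail_rpow {σ : ℝ} (y : ℝ) (hσ : 0 < σ) :
    Summable (fun p : Nat.Primes => if y < ((p:ℕ):ℝ) then ((p:ℕ):ℝ) ^ (-1-σ) else 0) := by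
  apply Summable.of_nonneg_of_le (fun p => by positivity) (fun p => ?_)
    ((Nat.Primes.summable_rpow).mpr (by linarith : -1-σ < -1))
  split
  · exact le_refl _
  · exact Real.rpow_nonneg (Nat.cast_nonneg _) _

private lemma sqrt_le_add_div {t d : ℝ} (ht : 0 ≤ t) (hd : 0 < d) :
    Real.sqrt t ≤ d + t / d := by
  rcases le_or_gt t (d^2) with hc | hc
  · have h1 : Real.sqrt t ≤ d := by
      rw [show d = Real.sqrt (d^2) from (Real.sqrt_sq hd.le).symm]
      exact Real.sqrt_le_sqrt hc
    have : 0 ≤ t / d := div_nonneg ht hd.le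
    linarith
  · have h1 : d ≤ Real.sqrt t := by
      rw [show d = Real.sqrt (d^2) from (Real.sqrt_sq hd.le).symm]
      exact Real.sqrt_le_sqrt hc.le
    have h2 : Real.sqrt t * Real.sqrt t = t := Real.mul_self_sqrt ht
    have h3 : Real.sqrt t ≤ t / d := by
      rw [le_div_iff₀ hd]
      calc Real.sqrt t * d ≤ Real.sqrt t * Real.sqrt t :=
            mul_le_mul_of_nonneg_left h1 (Real.sqrt_nonneg t)
        _ = t := h2
    linarith [hd.le]

private lemma abs_diff_le {βv gv : ℝ} {hv : ℂ} (hg0 : 0 ≤ gv) (hgβ : gv ≤ βv)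
    (hhg : ‖hv‖ ≤ gv) :
    ‖(gv:ℂ) - hv‖ ≤ Real.sqrt (2*βv) * Real.sqrt (gv - hv.re) := by
  have ht0 : 0 ≤ gv - hv.re := by
    have := Complex.re_le_norm hv
    linarith
  rw [← Real.sqrt_mul (by linarith : (0:ℝ) ≤ 2*βv), Complex.norm_def]
  apply Real.sqrt_le_sqrt
  have h1 : Complex.normSq ((gv:ℂ) - hv)
      = (gv - hv.re)*(gv - hv.re) + (0 - hv.im)*(0 - hv.im) := by
    simp [Complex.normSq_apply, Complex.sub_re, Complex.sub_im, Complex.ofReal_re,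
      Complex.ofReal_im]
  have h2 : hv.re*hv.re + hv.im*hv.im ≤ gv*gv := by
    have hsq := Complex.sq_norm hv
    have habs := norm_nonneg hv
    nlinarith [Complex.normSq_apply hv]
  rw [h1]
  nlinarith [mul_le_mul_of_nonneg_right hgβ ht0]

set_option maxHeartbeats 1000000 in
theorem tsum_abs_diff_tendsto_zero
    (β : ℝ) (hβ : 0 < β) (g : ℕ → ℝ) (h : ℕ → ℂ)
    (hg0 : ∀ p : ℕ, p.Prime → 0 ≤ g p)
    (hgβ : ∀ p : ℕ, p.Prime → g p ≤ β)
    (hhg : ∀ p : ℕ, p.Prime → ‖h p‖ ≤ g p)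
    (hconv : Summable (fun p : Nat.Primes => (g p - (h p).re) / (p : ℕ)))
    (ε : ℝ) (hε0 : 0 < ε) (hε1 : ε < 1) :
    Filter.Tendsto
      (fun x : ℝ =>
        ∑' p : Nat.Primes,
          (if x ^ ε < ((p : ℕ) : ℝ) then
            ((p : ℕ) : ℝ) ^ (-1 - 1 / Real.log x) *
              ‖(g (p : ℕ) : ℂ) - h (p : ℕ)‖ else 0))
      Filter.atTop (nhds 0) := by
  rw [Metric.tendsto_nhds]
  intro η hη
  set A := Real.sqrt (2*β) with hA
  have hA0 : 0 < A := Real.sqrt_pos.2 (by linarith)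
  have hlog4pos : 0 < Real.log 4 := Real.log_pos (by norm_num)
  set C := 3 * Real.log 4 / ε with hC
  have hC0 : 0 < C := by positivity
  set d := η / (2 * (A+1) * (C+1)) with hd
  have hd0 : 0 < d := by positivity
  set c := η * d / (2 * (A+1)) with hc
  have hc0 : 0 < c := by positivity
  have ht0 : ∀ p : Nat.Primes, 0 ≤ g p - (h p).re := fun p => by
    have h1 := Complex.re_le_norm (h p)
    have h2 := hhg p p.2
    linarith
  obtain ⟨F, hF⟩ := Filter.eventually_atTop.mp
    ((tendsto_tsum_compl_atTop_zero
      (f := fun p : Nat.Primes => (g p - (h p).re) / (p:ℕ))).eventually_lt_const hc0)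
  have hFc := hF F le_rfl
  set M := F.sup (fun p => (p:ℕ)) with hM
  have hev1 : ∀ᶠ x : ℝ in Filter.atTop, Real.exp 1 ≤ x := Filter.eventually_ge_atTop _
  have hev2 : ∀ᶠ x : ℝ in Filter.atTop, (max 2 (M:ℝ)) + 1 ≤ x ^ ε :=
    (tendsto_rpow_atTop hε0).eventually_ge_atTop _
  filter_upwards [hev1, hev2] with x hx1 hx2
  have hx0 : (0:ℝ) < x := lt_of_lt_of_le (Real.exp_pos 1) hx1
  have hlx : 1 ≤ Real.log x := by
    calc (1:ℝ) = Real.log (Real.exp 1) := (Real.log_exp 1).symm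
      _ ≤ Real.log x := Real.log_le_log (Real.exp_pos 1) hx1
  set σ := 1 / Real.log x with hσdef
  have hσ0 : 0 < σ := by rw [hσdef]; positivity
  have hy2 : (2:ℝ) ≤ x ^ ε := by
    have := le_max_left (2:ℝ) (M:ℝ)
    linarith
  have hMy : (M:ℝ) < x ^ ε := by
    have := le_max_right (2:ℝ) (M:ℝ)
    linarith
  set f1 : Nat.Primes → ℝ :=
    fun p => if x ^ ε < ((p:ℕ):ℝ) then ((p:ℕ):ℝ) ^ (-1-σ) else 0 with hf1
  set f2 : Nat.Primes → ℝ :=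
    fun p => if x ^ ε < ((p:ℕ):ℝ) then (g p - (h p).re) / ((p:ℕ):ℝ) else 0 with hf2
  have hs1 : Summable f1 := summable_tail_rpow (x ^ ε) hσ0
  have hs2 : Summable f2 := by
    apply Summable.of_nonneg_of_le (fun p => ?_) (fun p => ?_) hconv
    · simp only [hf2]; split
      · exact div_nonneg (ht0 p) (Nat.cast_nonneg _)
      · exact le_refl 0
    · simp only [hf2]; split
      · exact le_refl _
      · exact div_nonneg (ht0 p) (Nat.cast_nonneg _)
  have hsld : Summable (fun p : Nat.Primes => (A*d) * f1 p + (A/d) * f2 p) :=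
    (hs1.mul_left _).add (hs2.mul_left _)
  have hpoint : ∀ p : Nat.Primes,
      (if x ^ ε < ((p:ℕ):ℝ) then
        ((p:ℕ):ℝ) ^ (-1-σ) * ‖(g (p:ℕ) : ℂ) - h (p:ℕ)‖ else 0)
        ≤ (A*d) * f1 p + (A/d) * f2 p := by
    intro p
    simp only [hf1, hf2]
    by_cases hcase : x ^ ε < ((p:ℕ):ℝ)
    · simp only [if_pos hcase]
      have hp1 : (1:ℝ) ≤ ((p:ℕ):ℝ) := by exact_mod_cast p.2.one_lt.le
      have hrp0 : 0 ≤ ((p:ℕ):ℝ) ^ (-1-σ) := Real.rpow_nonneg (by linarith) _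
      have habs : ‖(g (p:ℕ) : ℂ) - h (p:ℕ)‖
          ≤ A * Real.sqrt (g p - (h p).re) :=
        abs_diff_le (hg0 p p.2) (hgβ p p.2) (hhg p p.2)
      have hsq : Real.sqrt (g p - (h p).re) ≤ d + (g p - (h p).re)/d :=
        sqrt_le_add_div (ht0 p) hd0
      have hple : ((p:ℕ):ℝ) ^ (-1-σ) ≤ ((p:ℕ):ℝ)⁻¹ := by
        have := Real.rpow_le_rpow_of_exponent_le hp1 (show -1-σ ≤ -1 by linarith)
        rwa [Real.rpow_neg_one] at this
      have hstep : ‖(g (p:ℕ) : ℂ) - h (p:ℕ)‖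
          ≤ A * (d + (g p - (h p).re)/d) :=
        habs.trans (mul_le_mul_of_nonneg_left hsq hA0.le)
      calc ((p:ℕ):ℝ) ^ (-1-σ) * ‖(g (p:ℕ) : ℂ) - h (p:ℕ)‖
          ≤ ((p:ℕ):ℝ) ^ (-1-σ) * (A * (d + (g p - (h p).re)/d)) :=
            mul_le_mul_of_nonneg_left hstep hrp0
        _ = (A*d) * ((p:ℕ):ℝ) ^ (-1-σ)
            + (A/d) * (((p:ℕ):ℝ) ^ (-1-σ) * (g p - (h p).re)) := by
            field_simp
        _ ≤ (A*d) * ((p:ℕ):ℝ) ^ (-1-σ)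
            + (A/d) * ((g p - (h p).re) / ((p:ℕ):ℝ)) := by
            have hmul : ((p:ℕ):ℝ) ^ (-1-σ) * (g p - (h p).re)
                ≤ (g p - (h p).re) / ((p:ℕ):ℝ) := by
              rw [div_eq_mul_inv, mul_comm (((p:ℕ):ℝ)^(-1-σ))]
              exact mul_le_mul_of_nonneg_left hple (ht0 p)
            have : 0 ≤ A/d := by positivity
            nlinarith [mul_le_mul_of_nonneg_left hmul this]
    · simp only [if_neg hcase, mul_zero, add_zero, zero_add]
      positivity
  have htermnn : ∀ p : Nat.Primes,
      0 ≤ (if x ^ ε < ((p:ℕ):ℝ) then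
        ((p:ℕ):ℝ) ^ (-1-σ) * ‖(g (p:ℕ) : ℂ) - h (p:ℕ)‖ else 0) := by
    intro p
    split
    · exact mul_nonneg (Real.rpow_nonneg (Nat.cast_nonneg _) _) (norm_nonneg _)
    · exact le_refl 0
  have hterm_summable : Summable (fun p : Nat.Primes =>
      if x ^ ε < ((p:ℕ):ℝ) then
        ((p:ℕ):ℝ) ^ (-1-σ) * ‖(g (p:ℕ) : ℂ) - h (p:ℕ)‖ else 0) :=
    Summable.of_nonneg_of_le htermnn hpoint hsld
  have hS : (∑' p : Nat.Primes,
      (if x ^ ε < ((p:ℕ):ℝ) then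
        ((p:ℕ):ℝ) ^ (-1-σ) * ‖(g (p:ℕ) : ℂ) - h (p:ℕ)‖ else 0))
      ≤ (A*d) * (∑' p, f1 p) + (A/d) * (∑' p, f2 p) := by
    calc _ ≤ ∑' p : Nat.Primes, ((A*d) * f1 p + (A/d) * f2 p) :=
          Summable.tsum_le_tsum hpoint hterm_summable hsld
      _ = (∑' p : Nat.Primes, (A*d) * f1 p) + (∑' p : Nat.Primes, (A/d) * f2 p) :=
          Summable.tsum_add (hs1.mul_left _) (hs2.mul_left _)
      _ = (A*d) * (∑' p, f1 p) + (A/d) * (∑' p, f2 p) := by rw [tsum_mul_left, tsum_mul_left]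
  have hC1 : (∑' p, f1 p) ≤ C := by
    have hb := tail_bound (σ := σ) (y := x ^ ε) hσ0 hy2
    rw [Real.log_rpow hx0] at hb
    refine le_trans hb ?_
    have h1σ : 1/σ = Real.log x := by rw [hσdef, one_div_one_div]
    rw [h1σ, hC]
    rw [div_le_div_iff₀ (by positivity) hε0]
    have key : Real.log 4 * (2 + Real.log x) ≤ Real.log 4 * (3 * Real.log x) :=
      mul_le_mul_of_nonneg_left (by linarith) hlog4pos.le
    nlinarith [mul_le_mul_of_nonneg_right key hε0.le]
  have hT : (∑' p, f2 p) < c := by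
    have hsub : ∀ p : Nat.Primes, f2 p ≤
        Set.indicator {q : Nat.Primes | q ∉ F}
          (fun q => (g q - (h q).re) / ((q:ℕ):ℝ)) p := by
      intro p
      simp only [hf2]
      by_cases hcase : x ^ ε < ((p:ℕ):ℝ)
      · rw [if_pos hcase]
        have hpF : p ∉ F := by
          intro hpF
          have hle : ((p:ℕ):ℝ) ≤ (M:ℝ) := by
            exact_mod_cast Finset.le_sup (f := fun q : Nat.Primes => (q:ℕ)) hpF
          linarith
        rw [Set.indicator_of_mem (by exact hpF)]
      · rw [if_neg hcase]
        exact Set.indicator_nonneg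
          (fun q _ => div_nonneg (ht0 q) (Nat.cast_nonneg _)) p
    have hsumInd : Summable (Set.indicator {q : Nat.Primes | q ∉ F}
        (fun q => (g q - (h q).re) / ((q:ℕ):ℝ))) := hconv.indicator _
    calc (∑' p, f2 p)
        ≤ ∑' p : Nat.Primes, Set.indicator {q : Nat.Primes | q ∉ F}
            (fun q => (g q - (h q).re) / ((q:ℕ):ℝ)) p :=
          Summable.tsum_le_tsum hsub hs2 hsumInd
      _ = ∑' q : {p : Nat.Primes // p ∉ F}, (g q - (h q).re) / ((q:ℕ):ℝ) :=
          (tsum_subtype {q : Nat.Primes | q ∉ F} _).symm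
      _ < c := hFc
  have hS0 : 0 ≤ (∑' p : Nat.Primes,
      (if x ^ ε < ((p:ℕ):ℝ) then
        ((p:ℕ):ℝ) ^ (-1-σ) * ‖(g (p:ℕ) : ℂ) - h (p:ℕ)‖ else 0)) :=
    tsum_nonneg htermnn
  rw [Real.dist_eq, sub_zero, abs_of_nonneg hS0]
  have hb1 : (A*d) * (∑' p, f1 p) ≤ (A*d) * C :=
    mul_le_mul_of_nonneg_left hC1 (by positivity)
  have hb2 : (A/d) * (∑' p, f2 p) < (A/d) * c :=
    mul_lt_mul_of_pos_left hT (by positivity)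
  have e1 : (A/d) * c = A * η / (2*(A+1)) := by
    rw [hc]
    field_simp
  have e2 : (A*d) * C ≤ η/2 := by
    rw [hd]
    have hq : A * (η / (2*(A+1)*(C+1))) * C = (A*C*η) / (2*(A+1)*(C+1)) := by ring
    rw [hq, div_le_div_iff₀ (by positivity) (by norm_num : (0:ℝ) < 2)]
    have key : A*C ≤ (A+1)*(C+1) := by nlinarith
    calc A*C*η*2 = (A*C)*(2*η) := by ring
      _ ≤ ((A+1)*(C+1))*(2*η) := mul_le_mul_of_nonneg_right key (by positivity)
      _ = η*(2*(A+1)*(C+1)) := by ring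
  have e3 : A * η / (2*(A+1)) < η/2 := by
    rw [div_lt_div_iff₀ (by positivity) (by norm_num : (0:ℝ) < 2)]
    have := mul_lt_mul_of_pos_right (lt_add_one A) (by positivity : (0:ℝ) < η*2)
    linarith
  calc (∑' p : Nat.Primes,
      (if x ^ ε < ((p:ℕ):ℝ) then
        ((p:ℕ):ℝ) ^ (-1-σ) * ‖(g (p:ℕ) : ℂ) - h (p:ℕ)‖ else 0))
      ≤ (A*d) * (∑' p, f1 p) + (A/d) * (∑' p, f2 p) := hS
    _ < η/2 + η/2 := by
        have := hb2.trans_le (le_of_eq e1)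
        linarith [this.trans e3, hb1.trans e2]
    _ = η := by ring
end

section
/- Let g be a function on primes with 0 ≤ g(p) ≤ β such that for each ε ∈ (0,1), liminf_{x→∞} (ε log x)^{-1} Σ_{x^{1−ε} < p ≤ x} g(p)(log p)/p ≥ c > 0. Then for each α with 0 < α < c there is a set R of primes such that Σ_{r ∈ R, r ≤ x} g(r)(log r)/r ∼ α log x as x → ∞. -/
open scoped Classical
open Filter

namespace GreedyPrimes

noncomputable def W (g : ℕ → ℝ) (n : ℕ) : ℝ := g n * Real.log n / n

noncomputable def S (g : ℕ → ℝ) (α : ℝ) : ℕ → Finset ℕ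
  | 0 => ∅
  | (n+1) =>
    if Nat.Prime n ∧ (∑ m ∈ S g α n, W g m) + W g n ≤ α * Real.log n
    then insert n (S g α n) else S g α n

variable {g : ℕ → ℝ} {α : ℝ}

lemma S_subset_range : ∀ n, S g α n ⊆ Finset.range n := by
  intro n
  induction n with
  | zero => simp [S]
  | succ n ih =>
    rw [S]
    split
    · intro m hm
      rcases Finset.mem_insert.1 hm with rfl | hm
      · exact Finset.mem_range.2 (Nat.lt_succ_self _)
      · exact Finset.range_subset_range.2 (Nat.le_succ n) (ih hm)
    · exact fun m hm => Finset.range_subset_range.2 (Nat.le_succ n) (ih hm)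

lemma prime_of_mem_S {m n : ℕ} (h : m ∈ S g α n) : Nat.Prime m := by
  induction n with
  | zero => simp [S] at h
  | succ n ih =>
    rw [S] at h
    split at h
    · rcases Finset.mem_insert.1 h with rfl | h
      · exact (by assumption : Nat.Prime m ∧ _).1
      · exact ih h
    · exact ih h

lemma S_mono {m n : ℕ} (h : m ≤ n) : S g α m ⊆ S g α n := by
  induction n with
  | zero => simp [Nat.le_zero.1 h]
  | succ n ih =>
    rcases eq_or_lt_of_le h with rfl | h'
    · exact subset_rfl
    · refine (ih (Nat.lt_succ_iff.1 h')).trans ?_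
      rw [S]; split
      · exact Finset.subset_insert _ _
      · exact subset_rfl

lemma mem_S_self {m n : ℕ} (h : m ∈ S g α n) : m ∈ S g α (m + 1) := by
  induction n with
  | zero => simp [S] at h
  | succ n ih =>
    rw [S] at h
    split at h
    · rcases Finset.mem_insert.1 h with rfl | h
      · rw [S]; simp_all
      · exact ih h
    · exact ih h

lemma mem_S_iff {m n : ℕ} : m ∈ S g α n ↔ m ∈ S g α (m + 1) ∧ m < n := by
  constructor
  · exact fun h => ⟨mem_S_self h, Finset.mem_range.1 (S_subset_range n h)⟩
  · exact fun ⟨h1, h2⟩ => S_mono (Nat.succ_le_of_lt h2) h1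

lemma not_mem_S {p : ℕ} (hp : Nat.Prime p) (h : p ∉ S g α (p + 1)) :
    α * Real.log p < (∑ m ∈ S g α p, W g m) + W g p := by
  by_contra hcon
  push_neg at hcon
  rw [S, if_pos ⟨hp, hcon⟩] at h
  exact h (Finset.mem_insert_self _ _)

lemma W_nonneg (hg0 : ∀ p : ℕ, p.Prime → 0 ≤ g p) {p : ℕ} (hp : Nat.Prime p) :
    0 ≤ W g p := by
  have h1 : (1:ℝ) ≤ p := by exact_mod_cast hp.one_lt.le
  have := hg0 p hp
  have h2 : 0 ≤ Real.log p := Real.log_nonneg h1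
  exact div_nonneg (mul_nonneg this h2) (Nat.cast_nonneg p)

lemma sum_S_nonneg (hg0 : ∀ p : ℕ, p.Prime → 0 ≤ g p) (n : ℕ) :
    0 ≤ ∑ m ∈ S g α n, W g m :=
  Finset.sum_nonneg fun m hm => W_nonneg hg0 (prime_of_mem_S hm)

lemma log_nat_mono (n : ℕ) : Real.log n ≤ Real.log (n + 1 : ℕ) := by
  rcases Nat.eq_zero_or_pos n with rfl | hn
  · simp
  · apply Real.log_le_log (by exact_mod_cast hn)
    exact_mod_cast Nat.le_succ n

lemma sum_S_le (hα0 : 0 < α) (n : ℕ) :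
    (∑ m ∈ S g α n, W g m) ≤ α * Real.log n := by
  induction n with
  | zero => simp [S]
  | succ n ih =>
    have hmono : α * Real.log n ≤ α * Real.log (n+1 : ℕ) :=
      mul_le_mul_of_nonneg_left (log_nat_mono n) hα0.le
    rw [S]
    split
    · rename_i hcond
      rw [Finset.sum_insert (fun hmem =>
        absurd (Finset.mem_range.1 (S_subset_range n hmem)) (lt_irrefl n))]
      calc (W g n + ∑ m ∈ S g α n, W g m) = (∑ m ∈ S g α n, W g m) + W g n := by ring
        _ ≤ α * Real.log n := hcond.2
        _ ≤ _ := hmono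
    · exact ih.trans hmono


lemma main_lower (β c : ℝ) (hβ : 0 < β) (hc : 0 < c) (g : ℕ → ℝ)
    (hg0 : ∀ p : ℕ, p.Prime → 0 ≤ g p)
    (hgβ : ∀ p : ℕ, p.Prime → g p ≤ β)
    (hliminf : ∀ ε : ℝ, 0 < ε → ε < 1 →
      c ≤ Filter.liminf
        (fun x : ℝ => (ε * Real.log x)⁻¹ *
          ∑ p ∈ (Finset.range (⌊x⌋₊ + 1)).filter
              (fun p => Nat.Prime p ∧ x ^ (1 - ε) < p ∧ (p : ℝ) ≤ x),
            g p * Real.log p / p)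
        Filter.atTop)
    (α : ℝ) (hα0 : 0 < α) (hαc : α < c)
    (δ : ℝ) (hδ0 : 0 < δ) (hδα : δ < α) :
    ∀ᶠ x in Filter.atTop, (α - δ) * Real.log x ≤ ∑ m ∈ S g α (⌊x⌋₊ + 1), W g m := by
  set ε : ℝ := δ / (2 * α) with hεdef
  have hε0 : 0 < ε := by positivity
  have hε1 : ε < 1 := by
    rw [hεdef, div_lt_one (by positivity)]; linarith
  have h1ε : 0 < 1 - ε := by linarith
  have hαε : α * ε = δ / 2 := by field_simp [hεdef]; rw [hεdef]; field_simp
  set c'' : ℝ := (α + c) / 2 with hc''def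
  have hαc'' : α < c'' := by rw [hc''def]; linarith
  have hc''c : c'' < c := by rw [hc''def]; linarith
  -- window sum lower bound, eventually
  have hbdd : Filter.IsBoundedUnder (· ≥ ·) Filter.atTop
      (fun x : ℝ => (ε * Real.log x)⁻¹ *
        ∑ p ∈ (Finset.range (⌊x⌋₊ + 1)).filter
            (fun p => Nat.Prime p ∧ x ^ (1 - ε) < p ∧ (p : ℝ) ≤ x),
          g p * Real.log p / p) := by
    refine ⟨0, ?_⟩
    rw [Filter.eventually_map]
    filter_upwards [eventually_ge_atTop (1:ℝ)] with x hx
    have h1 : 0 ≤ (ε * Real.log x)⁻¹ := by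
      have := Real.log_nonneg hx; positivity
    refine le_trans (le_refl 0) (mul_nonneg h1 (Finset.sum_nonneg ?_))
    intro p hp
    have hp' := (Finset.mem_filter.1 hp).2
    have hpp : Nat.Prime p := hp'.1
    have h2 : (1:ℝ) ≤ p := by exact_mod_cast hpp.one_lt.le
    have := hg0 p hpp
    have := Real.log_nonneg h2
    positivity
  have hwin : ∀ᶠ x : ℝ in atTop, c'' * (ε * Real.log x) ≤
      ∑ p ∈ (Finset.range (⌊x⌋₊ + 1)).filter
          (fun p => Nat.Prime p ∧ x ^ (1 - ε) < p ∧ (p : ℝ) ≤ x),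
        g p * Real.log p / p := by
    have h1 := Filter.eventually_lt_of_lt_liminf
      (lt_of_lt_of_le hc''c (hliminf ε hε0 hε1)) hbdd
    filter_upwards [h1, eventually_gt_atTop (1:ℝ)] with x hx hx1
    have hlog : 0 < Real.log x := Real.log_pos hx1
    have hεlog : 0 < ε * Real.log x := by positivity
    rw [inv_mul_eq_div, lt_div_iff₀ hεlog] at hx
    linarith [hx]
  have hsmall : ∀ᶠ x : ℝ in atTop, β * Real.log x / x ^ (1 - ε) ≤ 1 := by
    have h0 : Tendsto (fun x : ℝ => β * (Real.log x / x ^ (1 - ε))) atTop (nhds (β * 0)) :=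
      ((isLittleO_log_rpow_atTop h1ε).tendsto_div_nhds_zero).const_mul β
    rw [mul_zero] at h0
    filter_upwards [h0.eventually (eventually_le_nhds (by norm_num : (0:ℝ) < 1))] with x hx
    rw [mul_div_assoc]
    exact hx
  -- the key step
  have key : ∀ m : ℝ, 0 ≤ m →
      (∀ᶠ x : ℝ in atTop, m * Real.log x ≤ ∑ k ∈ S g α (⌊x⌋₊ + 1), W g k) →
      (∀ᶠ x : ℝ in atTop,
        min (α - δ) (m * (1 - ε) + c'' * ε) * Real.log x ≤ ∑ k ∈ S g α (⌊x⌋₊ + 1), W g k) := by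
    intro m hm0 hm
    have hy : Tendsto (fun x : ℝ => x ^ (1 - ε)) atTop atTop := tendsto_rpow_atTop h1ε
    have hm' := hy.eventually hm
    filter_upwards [hm', hwin, hsmall, Real.tendsto_log_atTop.eventually_ge_atTop (2/δ),
      eventually_ge_atTop (1:ℝ)] with x hmx hwinx hsmallx hlogx hx1
    have hx0 : (0:ℝ) < x := lt_of_lt_of_le one_pos hx1
    have hlognn : 0 ≤ Real.log x := Real.log_nonneg hx1
    set K := ⌊x⌋₊ + 1 with hK
    set L := ⌊x ^ (1 - ε)⌋₊ + 1 with hL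
    by_cases hdef : (α - δ) * Real.log x ≤ ∑ k ∈ S g α K, W g k
    · exact le_trans (mul_le_mul_of_nonneg_right (min_le_left _ _) hlognn) hdef
    · push_neg at hdef
      have hyx : x ^ (1 - ε) ≤ x := by
        calc x ^ (1 - ε) ≤ x ^ (1:ℝ) :=
              Real.rpow_le_rpow_of_exponent_le hx1 (by linarith)
          _ = x := Real.rpow_one x
      have hy0 : (0:ℝ) < x ^ (1 - ε) := Real.rpow_pos_of_pos hx0 _
      have hLK : L ≤ K := Nat.succ_le_succ (Nat.floor_le_floor hyx)
      -- all window primes are chosen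
      have hmemR : ∀ p ∈ (Finset.range K).filter
          (fun p => Nat.Prime p ∧ x ^ (1 - ε) < p ∧ (p : ℝ) ≤ x),
          p ∈ S g α (p + 1) := by
        intro p hp
        rw [Finset.mem_filter, Finset.mem_range] at hp
        obtain ⟨hpK, hpp, hpy, hpx⟩ := hp
        by_contra hnot
        have hkey := not_mem_S hpp hnot
        have hp0 : (0:ℝ) < p := by exact_mod_cast hpp.pos
        have hp1 : (1:ℝ) ≤ p := by exact_mod_cast hpp.one_lt.le
        have hlogp0 : 0 ≤ Real.log p := Real.log_nonneg hp1
        have hlogpx : Real.log p ≤ Real.log x := (Real.log_le_log_iff hp0 hx0).2 hpx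
        have hWp : W g p ≤ 1 := by
          have h1 : W g p ≤ β * Real.log x / x ^ (1 - ε) := by
            apply div_le_div₀ (by positivity)
            · exact mul_le_mul (hgβ p hpp) hlogpx hlogp0 hβ.le
            · exact hy0
            · exact hpy.le
          linarith
        have hSpK : (∑ k ∈ S g α p, W g k) ≤ ∑ k ∈ S g α K, W g k :=
          Finset.sum_le_sum_of_subset_of_nonneg (S_mono hpK.le)
            (fun i hi _ => W_nonneg hg0 (prime_of_mem_S hi))
        have hlogxy : Real.log (x ^ (1 - ε)) < Real.log p := Real.log_lt_log hy0 hpy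
        rw [Real.log_rpow hx0] at hlogxy
        have h3 : α * ((1 - ε) * Real.log x) ≤ α * Real.log p :=
          mul_le_mul_of_nonneg_left hlogxy.le hα0.le
        have h2 : 1 ≤ (δ / 2) * Real.log x := by
          have := mul_le_mul_of_nonneg_left hlogx (by positivity : (0:ℝ) ≤ δ / 2)
          have heq : (δ / 2) * (2 / δ) = 1 := by field_simp
          linarith
        nlinarith [hkey, hWp, hSpK, h3, h2, hdef, hαε, hlognn]
      -- decomposition
      have hsubdiff : (Finset.range K).filter
          (fun p => Nat.Prime p ∧ x ^ (1 - ε) < p ∧ (p : ℝ) ≤ x) ⊆ S g α K \ S g α L := by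
        intro p hp
        have hp' := hp
        rw [Finset.mem_filter, Finset.mem_range] at hp'
        obtain ⟨hpK, hpp, hpy, hpx⟩ := hp'
        refine Finset.mem_sdiff.2 ⟨S_mono (Nat.succ_le_of_lt hpK) (hmemR p hp), ?_⟩
        intro hmem
        have hpL : p < L := Finset.mem_range.1 (S_subset_range L hmem)
        have : (p:ℝ) ≤ x ^ (1 - ε) := (Nat.le_floor_iff hy0.le).1 (Nat.lt_succ_iff.1 hpL)
        linarith
      have hdecomp : (∑ k ∈ S g α L, W g k) + (∑ k ∈ S g α K \ S g α L, W g k)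
          = ∑ k ∈ S g α K, W g k := by
        rw [add_comm]; exact Finset.sum_sdiff (S_mono hLK)
      have hwle : (∑ p ∈ (Finset.range K).filter
            (fun p => Nat.Prime p ∧ x ^ (1 - ε) < p ∧ (p : ℝ) ≤ x),
          g p * Real.log p / p) ≤ ∑ k ∈ S g α K \ S g α L, W g k :=
        Finset.sum_le_sum_of_subset_of_nonneg hsubdiff
          (fun i hi _ => W_nonneg hg0 (prime_of_mem_S (Finset.mem_sdiff.1 hi).1))
      have hmx' : m * ((1 - ε) * Real.log x) ≤ ∑ k ∈ S g α L, W g k := by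
        have := hmx
        rwa [Real.log_rpow hx0] at this
      calc min (α - δ) (m * (1 - ε) + c'' * ε) * Real.log x
          ≤ (m * (1 - ε) + c'' * ε) * Real.log x :=
            mul_le_mul_of_nonneg_right (min_le_right _ _) hlognn
        _ = m * ((1 - ε) * Real.log x) + c'' * (ε * Real.log x) := by ring
        _ ≤ (∑ k ∈ S g α L, W g k) + (∑ k ∈ S g α K \ S g α L, W g k) :=
            add_le_add hmx' (le_trans hwinx hwle)
        _ = ∑ k ∈ S g α K, W g k := hdecomp
  -- iterate
  set d' : ℝ := (c - α) / 2 + δ with hd'def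
  have hd'0 : 0 < d' := by rw [hd'def]; linarith
  have hc''d' : c'' - d' = α - δ := by rw [hc''def, hd'def]; ring
  have iter : ∀ j : ℕ, ∀ᶠ x : ℝ in atTop,
      min (α - δ) (j * (ε * d')) * Real.log x ≤ ∑ k ∈ S g α (⌊x⌋₊ + 1), W g k := by
    intro j
    induction j with
    | zero =>
      filter_upwards [eventually_ge_atTop (1:ℝ)] with x hx
      have : min (α - δ) ((0:ℕ) * (ε * d')) = 0 := by
        simp [min_eq_right (by linarith : (0:ℝ) ≤ α - δ)]
      rw [this, zero_mul]
      exact sum_S_nonneg hg0 _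
    | succ j ih =>
      have hmin0 : 0 ≤ min (α - δ) ((j:ℝ) * (ε * d')) :=
        le_min (by linarith) (by positivity)
      have h1 := key _ hmin0 ih
      filter_upwards [h1, eventually_ge_atTop (1:ℝ)] with x hx hx1
      refine le_trans (mul_le_mul_of_nonneg_right ?_ (Real.log_nonneg hx1)) hx
      set m := min (α - δ) ((j:ℝ) * (ε * d')) with hmdef
      have hm1 : m ≤ α - δ := min_le_left _ _
      have h2 : m + ε * d' ≤ m * (1 - ε) + c'' * ε := by nlinarith [hε0.le, hm1, hc''d']
      refine le_min (min_le_left _ _) (le_trans ?_ h2)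
      rcases le_total (α - δ) ((j:ℝ) * (ε * d')) with H | H
      · have hme : m = α - δ := min_eq_left H
        have := min_le_left (α - δ) (((j:ℕ)+1 : ℝ) * (ε * d'))
        have hεd' : 0 ≤ ε * d' := by positivity
        push_cast
        rw [hme]
        calc min (α - δ) (((j:ℝ)+1) * (ε * d')) ≤ α - δ := min_le_left _ _
          _ ≤ (α - δ) + ε * d' := by linarith
      · have hme : m = (j:ℝ) * (ε * d') := min_eq_right H
        have h4 : min (α - δ) (((j:ℕ)+1:ℕ) * (ε * d') : ℝ) ≤ ((j:ℕ)+1:ℕ) * (ε * d') :=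
          min_le_right _ _
        push_cast at h4 ⊢
        rw [hme]
        linarith
  obtain ⟨j, hj⟩ := exists_nat_ge ((α - δ) / (ε * d'))
  have hεd' : 0 < ε * d' := by positivity
  have hfin : α - δ ≤ (j:ℝ) * (ε * d') := by
    rw [div_le_iff₀ hεd'] at hj; linarith
  filter_upwards [iter j] with x hx
  rwa [min_eq_left hfin] at hx


end GreedyPrimes

open GreedyPrimes in
open scoped Classical in
theorem exists_subsequence_of_primes
    (β c : ℝ) (hβ : 0 < β) (hc : 0 < c) (g : ℕ → ℝ)
    (hg0 : ∀ p : ℕ, p.Prime → 0 ≤ g p)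
    (hgβ : ∀ p : ℕ, p.Prime → g p ≤ β)
    (hliminf : ∀ ε : ℝ, 0 < ε → ε < 1 →
      c ≤ Filter.liminf
        (fun x : ℝ => (ε * Real.log x)⁻¹ *
          ∑ p ∈ (Finset.range (⌊x⌋₊ + 1)).filter
              (fun p => Nat.Prime p ∧ x ^ (1 - ε) < p ∧ (p : ℝ) ≤ x),
            g p * Real.log p / p)
        Filter.atTop)
    (α : ℝ) (hα0 : 0 < α) (hαc : α < c) :
    ∃ R : Set ℕ, (∀ r ∈ R, Nat.Prime r) ∧
      Filter.Tendsto
        (fun x : ℝ =>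
          (∑ r ∈ (Finset.range (⌊x⌋₊ + 1)).filter (fun r => r ∈ R),
            g r * Real.log r / r) / (α * Real.log x))
        Filter.atTop (nhds 1) := by
  refine ⟨{k : ℕ | k ∈ S g α (k + 1)}, fun r hr => prime_of_mem_S hr, ?_⟩
  have hfilter : ∀ n : ℕ,
      @Finset.filter ℕ (fun r => r ∈ {k : ℕ | k ∈ S g α (k + 1)})
        (fun r => Classical.propDecidable _) (Finset.range n) = S g α n := by
    intro n
    ext m
    simp only [Finset.mem_filter, Finset.mem_range, Set.mem_setOf_eq]
    exact ⟨fun ⟨h1, h2⟩ => mem_S_iff.2 ⟨h2, h1⟩,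
      fun h => ⟨(mem_S_iff.1 h).2, (mem_S_iff.1 h).1⟩⟩
  have hgoal : ∀ x : ℝ,
      (∑ r ∈ @Finset.filter ℕ (fun r => r ∈ {k : ℕ | k ∈ S g α (k + 1)})
          (fun r => Classical.propDecidable _) (Finset.range (⌊x⌋₊ + 1)),
        g r * Real.log r / r) = ∑ m ∈ S g α (⌊x⌋₊ + 1), W g m := by
    intro x
    rw [hfilter]
    rfl
  refine Filter.Tendsto.congr
    (f₁ := fun x : ℝ => (∑ m ∈ S g α (⌊x⌋₊ + 1), W g m) / (α * Real.log x))
    (fun x => by rw [hgoal x]) ?_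
  rw [Metric.tendsto_nhds]
  intro ζ hζ
  set δ : ℝ := min (α / 2) (α * ζ / 2) with hδdef
  have hδ0 : 0 < δ := by positivity
  have hδα : δ < α := lt_of_le_of_lt (min_le_left _ _) (by linarith)
  have hδζ : δ ≤ α * ζ / 2 := min_le_right _ _
  have hlow := main_lower β c hβ hc g hg0 hgβ hliminf α hα0 hαc δ hδ0 hδα
  filter_upwards [hlow, eventually_gt_atTop (1:ℝ),
    Real.tendsto_log_atTop.eventually_ge_atTop (2/ζ)] with x hlo hx1 hlogζ
  have hx0 : (0:ℝ) < x := lt_trans one_pos hx1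
  have hlogpos : 0 < Real.log x := Real.log_pos hx1
  have hαlog : 0 < α * Real.log x := by positivity
  rw [Real.dist_eq, abs_sub_lt_iff]
  -- upper bound : sum ≤ α * log (x+1) ≤ α * (log x + 1/x)
  have hub : (∑ m ∈ S g α (⌊x⌋₊ + 1), W g m) ≤ α * Real.log (x + 1) := by
    refine le_trans (sum_S_le hα0 (⌊x⌋₊ + 1)) ?_
    refine mul_le_mul_of_nonneg_left ?_ hα0.le
    apply Real.log_le_log (by positivity)
    push_cast
    have := Nat.floor_le hx0.le
    linarith
  have hlog1 : Real.log (x + 1) ≤ Real.log x + 1 / x := by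
    have h1 : Real.log (x + 1) - Real.log x = Real.log ((x+1)/x) := by
      rw [Real.log_div (by linarith) (ne_of_gt hx0)]
    have h2 : Real.log ((x+1)/x) ≤ (x+1)/x - 1 :=
      Real.log_le_sub_one_of_pos (by positivity)
    have h3 : (x+1)/x - 1 = 1/x := by field_simp; ring
    linarith
  have hub2 : (∑ m ∈ S g α (⌊x⌋₊ + 1), W g m) ≤ α * Real.log x + α / x := by
    have := mul_le_mul_of_nonneg_left hlog1 hα0.le
    calc (∑ m ∈ S g α (⌊x⌋₊ + 1), W g m) ≤ α * Real.log (x+1) := hub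
      _ ≤ α * (Real.log x + 1/x) := this
      _ = α * Real.log x + α / x := by ring
  constructor
  · -- f - 1 < ζ
    rw [div_sub' (ne_of_gt hαlog), div_lt_iff₀ hαlog]
    have hαx : α / x ≤ α * ((ζ/2) * Real.log x) := by
      have h1 : α / x ≤ α := by
        rw [div_le_iff₀ hx0]; nlinarith
      have h2 : 1 ≤ (ζ/2) * Real.log x := by
        have := mul_le_mul_of_nonneg_left hlogζ (by positivity : (0:ℝ) ≤ ζ/2)
        have heq : (ζ/2) * (2/ζ) = 1 := by field_simp
        linarith
      nlinarith
    nlinarith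
  · -- 1 - f < ζ
    rw [sub_div' (ne_of_gt hαlog), div_lt_iff₀ hαlog]
    have h1 : (α - δ) * Real.log x ≤ ∑ m ∈ S g α (⌊x⌋₊ + 1), W g m := hlo
    nlinarith [hδζ, hlogpos, hζ]
end
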